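/- arXiv:1505.07287 — 6 statements merged into one kernel-verified Lean document; each statement's English description precedes it below -/
import Mathlib

section
/- Let X = (0,1], φ(t) = t for t ≤ 1 and φ(t) = 1 for t > 1, and define M(x, y, t) = 1 if x = y and M(x, y, t) = (min{x,y}/max{x,y}) · φ(t) otherwise. Then (X, M, ·), with · ordinary multiplication, is a fuzzy metric space. -/
open Filter Topology

/-- A George–Veeramani fuzzy metric space: a continuous t-norm `star` together
with a fuzzy metric `M : X → X → (0,∞) → [0,1]`. -/
structure FuzzyMetricSpace (X : Type*) where
  star : ℝ → ℝ → ℝ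
  M : X → X → ℝ → ℝ
  star_mem : ∀ a b : ℝ, a ∈ Set.Icc (0:ℝ) 1 → b ∈ Set.Icc (0:ℝ) 1 →
    star a b ∈ Set.Icc (0:ℝ) 1
  star_assoc : ∀ a b c : ℝ, star (star a b) c = star a (star b c)
  star_comm : ∀ a b : ℝ, star a b = star b a
  star_cont : ContinuousOn (fun p : ℝ × ℝ => star p.1 p.2)
    (Set.Icc (0:ℝ) 1 ×ˢ Set.Icc (0:ℝ) 1)
  star_one : ∀ a ∈ Set.Icc (0:ℝ) 1, star a 1 = a
  star_mono : ∀ a b c d : ℝ, a ∈ Set.Icc (0:ℝ) 1 → b ∈ Set.Icc (0:ℝ) 1 →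
    c ∈ Set.Icc (0:ℝ) 1 → d ∈ Set.Icc (0:ℝ) 1 → a ≤ c → b ≤ d →
    star a b ≤ star c d
  M_pos : ∀ x y t, 0 < t → 0 < M x y t
  M_le_one : ∀ x y t, 0 < t → M x y t ≤ 1
  M_eq_one_iff : ∀ x y t, 0 < t → (M x y t = 1 ↔ x = y)
  M_symm : ∀ x y t, M x y t = M y x t
  M_triangle : ∀ x y z t s, 0 < t → 0 < s →
    star (M x y t) (M y z s) ≤ M x z (t + s)
  M_cont : ∀ x y, ContinuousOn (fun t => M x y t) (Set.Ioi (0:ℝ))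

lemma ratio_key {x y z : ℝ} (hx : 0 < x) (hy : 0 < y) (hz : 0 < z) :
    (min x y / max x y) * (min y z / max y z) ≤ min x z / max x z := by
  rw [div_mul_div_comm, div_le_div_iff₀ (by positivity) (by positivity)]
  rcases le_total x y with h1 | h1 <;> rcases le_total y z with h2 | h2 <;>
    rcases le_total x z with h3 | h3 <;>
    simp [min_def, max_def, h1, h2, h3] <;>
    nlinarith [mul_pos hx hy, mul_pos hy hz, mul_pos hx hz,
      mul_nonneg hx.le hy.le, mul_nonneg hy.le hz.le, mul_nonneg hx.le hz.le]

noncomputable def Mphi (x y : {x : ℝ // x ∈ Set.Ioc (0:ℝ) 1}) (t : ℝ) : ℝ :=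
  if x = y then 1 else (min x.1 y.1 / max x.1 y.1) * min t 1

lemma maxpos (x y : {x : ℝ // x ∈ Set.Ioc (0:ℝ) 1}) : (0:ℝ) < max x.1 y.1 :=
  lt_max_of_lt_left x.2.1

lemma ratio_nonneg (x y : {x : ℝ // x ∈ Set.Ioc (0:ℝ) 1}) :
    0 ≤ min x.1 y.1 / max x.1 y.1 :=
  div_nonneg (le_min x.2.1.le y.2.1.le) (maxpos x y).le

lemma ratio_le_one (x y : {x : ℝ // x ∈ Set.Ioc (0:ℝ) 1}) :
    min x.1 y.1 / max x.1 y.1 ≤ 1 :=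
  div_le_one_of_le₀ min_le_max (maxpos x y).le

lemma Mphi_pos (x y : {x : ℝ // x ∈ Set.Ioc (0:ℝ) 1}) {t : ℝ} (ht : 0 < t) :
    0 < Mphi x y t := by
  unfold Mphi
  split_ifs with h
  · norm_num
  · have hx := x.2.1; have hy := y.2.1
    have h1 : (0:ℝ) < min t 1 := lt_min ht one_pos
    have h2 : (0:ℝ) < min x.1 y.1 := lt_min hx hy
    have h3 := maxpos x y
    positivity

lemma Mphi_le_one (x y : {x : ℝ // x ∈ Set.Ioc (0:ℝ) 1}) {t : ℝ} (ht : 0 < t) :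
    Mphi x y t ≤ 1 := by
  unfold Mphi
  split_ifs with h
  · exact le_refl 1
  · calc min x.1 y.1 / max x.1 y.1 * min t 1 ≤ 1 * 1 :=
        mul_le_mul (ratio_le_one x y) (min_le_right t 1)
          (le_min ht.le one_pos.le) one_pos.le
      _ = 1 := one_mul 1

/-- On `X = (0,1]`, with `φ(t) = min{t,1}`, the map
`M(x,y,t) = 1` if `x = y` and `(min{x,y}/max{x,y})·φ(t)` otherwise, together
with the product t-norm, is a fuzzy metric space. -/
theorem Mphi_fuzzy_metric :
    ∃ F : FuzzyMetricSpace {x : ℝ // x ∈ Set.Ioc (0:ℝ) 1},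
      F.star = (fun a b : ℝ => a * b) ∧
      F.M = fun x y t =>
        if x = y then 1 else (min x.1 y.1 / max x.1 y.1) * min t 1 := by
  refine ⟨{
    star := fun a b => a * b
    M := Mphi
    star_mem := fun a b ha hb =>
      ⟨mul_nonneg ha.1 hb.1, mul_le_one₀ ha.2 hb.1 hb.2⟩
    star_assoc := fun a b c => mul_assoc a b c
    star_comm := mul_comm
    star_cont := (continuous_fst.mul continuous_snd).continuousOn
    star_one := fun a _ => mul_one a
    star_mono := fun a b c d _ hb hc _ hac hbd => mul_le_mul hac hbd hb.1 hc.1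
    M_pos := fun x y t ht => Mphi_pos x y ht
    M_le_one := fun x y t ht => Mphi_le_one x y ht
    M_eq_one_iff := ?_
    M_symm := ?_
    M_triangle := ?_
    M_cont := ?_ }, rfl, rfl⟩
  · -- M_eq_one_iff
    intro x y t ht
    constructor
    · intro h1
      by_contra h
      have hr : min x.1 y.1 / max x.1 y.1 < 1 :=
        (div_lt_one (maxpos x y)).mpr (min_lt_max.mpr (fun he => h (Subtype.ext he)))
      have : Mphi x y t < 1 := by
        unfold Mphi
        rw [if_neg h]
        calc min x.1 y.1 / max x.1 y.1 * min t 1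
            ≤ min x.1 y.1 / max x.1 y.1 * 1 :=
              mul_le_mul_of_nonneg_left (min_le_right t 1) (ratio_nonneg x y)
          _ = min x.1 y.1 / max x.1 y.1 := mul_one _
          _ < 1 := hr
      rw [h1] at this; exact lt_irrefl 1 this
    · intro h; simp [Mphi, h]
  · -- M_symm
    intro x y t
    unfold Mphi
    by_cases h : x = y
    · simp [h]
    · rw [if_neg h, if_neg (fun he => h he.symm), min_comm, max_comm]
  · -- M_triangle
    intro x y z t s ht hs
    by_cases hxz : x = z
    · have h1 : Mphi x z (t + s) = 1 := by simp [Mphi, hxz]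
      rw [h1]
      calc Mphi x y t * Mphi y z s ≤ 1 * 1 :=
            mul_le_mul (Mphi_le_one x y ht) (Mphi_le_one y z hs)
              (Mphi_pos y z hs).le one_pos.le
        _ = 1 := one_mul 1
    · have hts : min t 1 ≤ min (t + s) 1 := min_le_min (by linarith) le_rfl
      have hst : min s 1 ≤ min (t + s) 1 := min_le_min (by linarith) le_rfl
      by_cases hxy : x = y
      · have : Mphi x y t = 1 := by simp [Mphi, hxy]
        rw [this, one_mul]
        unfold Mphi
        rw [if_neg (hxy ▸ hxz), if_neg hxz, ← hxy]
        exact mul_le_mul_of_nonneg_left hst (ratio_nonneg x z)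
      · by_cases hyz : y = z
        · have : Mphi y z s = 1 := by simp [Mphi, hyz]
          rw [this, mul_one]
          unfold Mphi
          rw [if_neg (hyz ▸ hxy), if_neg hxz, hyz]
          exact mul_le_mul_of_nonneg_left hts (ratio_nonneg x z)
        · unfold Mphi
          rw [if_neg hxy, if_neg hyz, if_neg hxz]
          have key := ratio_key x.2.1 y.2.1 z.2.1
          have h2 : min t 1 * min s 1 ≤ min (t + s) 1 := by
            calc min t 1 * min s 1 ≤ min t 1 * 1 :=
                mul_le_mul_of_nonneg_left (min_le_right s 1) (le_min ht.le one_pos.le)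
              _ = min t 1 := mul_one _
              _ ≤ min (t + s) 1 := hts
          calc min x.1 y.1 / max x.1 y.1 * min t 1 * (min y.1 z.1 / max y.1 z.1 * min s 1)
              = (min x.1 y.1 / max x.1 y.1 * (min y.1 z.1 / max y.1 z.1)) * (min t 1 * min s 1) := by ring
            _ ≤ (min x.1 z.1 / max x.1 z.1) * min (t + s) 1 :=
                mul_le_mul key h2
                  (mul_nonneg (le_min ht.le one_pos.le) (le_min hs.le one_pos.le))
                  (ratio_nonneg x z)
  · -- M_cont
    intro x y
    unfold Mphi
    by_cases h : x = y
    · simp only [if_pos h]; exact continuousOn_const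
    · simp only [if_neg h]
      exact (continuous_const.mul (continuous_id.min continuous_const)).continuousOn
end

section
/- Let (X, M, ∗) be a fuzzy metric space and f : X → X. If f has the F-ergodic shadowing property, then f is F-chain transitive, assuming f is surjective and every δ-F-ergodic pseudo orbit of f can be ε-F-ergodic shadowed. -/
open Filter Topology

/-- A set `S ⊆ ℕ` has density zero. -/
def densityZero (S : Set ℕ) : Prop :=
  Tendsto (fun n : ℕ => (Nat.card (S ∩ Set.Ico 1 n : Set ℕ) : ℝ) / n)
    atTop (nhds 0)

variable {X : Type*}

/-- `c 0, c 1, …, c n` is a `δ`-F-chain of `f` (of length `n`). -/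
def IsFChain (F : FuzzyMetricSpace X) (f : X → X) (δ : ℝ) (n : ℕ) (c : ℕ → X) : Prop :=
  ∃ T₀ > (0:ℝ), ∀ i < n, F.M (f (c i)) (c (i + 1)) T₀ > 1 - δ

/-- `f` is F-chain transitive. -/
def FChainTransitive (F : FuzzyMetricSpace X) (f : X → X) : Prop :=
  ∀ x y : X, ∀ δ > (0:ℝ), ∃ n ≥ 1, ∃ c : ℕ → X,
    c 0 = x ∧ c n = y ∧ IsFChain F f δ n c

/-- `f` is F-chain mixing. -/
def FChainMixing (F : FuzzyMetricSpace X) (f : X → X) : Prop :=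
  ∀ x y : X, ∀ δ > (0:ℝ), ∃ N₀ : ℕ, ∀ n ≥ N₀, ∃ c : ℕ → X,
    c 0 = x ∧ c n = y ∧ IsFChain F f δ n c

/-- `f` has the F-ergodic shadowing property. -/
def FErgodicShadowing (F : FuzzyMetricSpace X) (f : X → X) : Prop :=
  ∀ ε > (0:ℝ), ∃ δ > (0:ℝ), ∀ (μ : ℕ → X) (T₀ : ℝ), 0 < T₀ →
    densityZero {i | F.M (f (μ i)) (μ (i + 1)) T₀ ≤ 1 - δ} →
    ∃ x : X, densityZero {i | F.M (f^[i] x) (μ i) T₀ ≤ 1 - ε}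

/-- `f` has the F-shadowing property (for infinite pseudo-orbits). -/
def FShadowing (F : FuzzyMetricSpace X) (f : X → X) : Prop :=
  ∀ ε > (0:ℝ), ∃ δ > (0:ℝ), ∀ μ : ℕ → X,
    (∃ T > (0:ℝ), ∀ i : ℕ, F.M (f (μ i)) (μ (i + 1)) T > 1 - δ) →
    ∃ x : X, ∃ T₀ > (0:ℝ), ∀ i : ℕ, F.M (f^[i] x) (μ i) T₀ > 1 - ε

/-- `f` has the F-shadowing property for finite chains. -/
def FShadowingFin (F : FuzzyMetricSpace X) (f : X → X) : Prop :=
  ∀ ε > (0:ℝ), ∃ δ > (0:ℝ), ∀ (n : ℕ) (c : ℕ → X), IsFChain F f δ n c →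
    ∃ x : X, ∃ T₀ > (0:ℝ), ∀ i ≤ n, F.M (f^[i] x) (c i) T₀ > 1 - ε

/-- The open ball in a fuzzy metric space. -/
def fuzzyBall (F : FuzzyMetricSpace X) (x : X) (r t : ℝ) : Set X :=
  {y | F.M x y t > 1 - r}

/-- The topology induced by a fuzzy metric. -/
def fuzzyTopology (F : FuzzyMetricSpace X) : TopologicalSpace X :=
  TopologicalSpace.generateFrom
    {s | ∃ (x : X) (r t : ℝ), 0 < r ∧ r < 1 ∧ 0 < t ∧ s = fuzzyBall F x r t}

/-- `f` is fuzzy continuous. -/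
def FuzzyContinuous (F : FuzzyMetricSpace X) (f : X → X) : Prop :=
  ∀ x₀ : X, ∀ ε ∈ Set.Ioo (0:ℝ) 1, ∀ t > (0:ℝ),
    ∃ δ ∈ Set.Ioo (0:ℝ) 1, ∃ t' > (0:ℝ), ∀ x : X,
      F.M x x₀ t' > 1 - δ → F.M (f x) (f x₀) t > 1 - ε

/-- The fuzzy metric space is complete: every Cauchy sequence converges. -/
def FComplete (F : FuzzyMetricSpace X) : Prop :=
  ∀ u : ℕ → X,
    (∀ ε > (0:ℝ), ∀ t > (0:ℝ), ∃ N : ℕ, ∀ m ≥ N, ∀ n ≥ N, F.M (u m) (u n) t > 1 - ε) →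
    ∃ x : X, ∀ t > (0:ℝ), Tendsto (fun n => F.M (u n) x t) atTop (nhds 1)

private lemma natLog_div_tendsto_aux :
    Tendsto (fun n : ℕ => (Nat.log 2 n : ℝ) / n) atTop (nhds 0) := by
  have h0 : Tendsto (fun x : ℝ => Real.log x / x) atTop (nhds 0) :=
    Real.isLittleO_log_id_atTop.tendsto_div_nhds_zero
  have h1 : Tendsto (fun n : ℕ => Real.log n / n) atTop (nhds 0) :=
    h0.comp tendsto_natCast_atTop_atTop
  have h2 := h1.const_mul (1 / Real.log 2)
  rw [mul_zero] at h2
  apply tendsto_of_tendsto_of_tendsto_of_le_of_le' tendsto_const_nhds h2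
  · filter_upwards [eventually_ge_atTop 1] with n hn
    positivity
  · filter_upwards [eventually_ge_atTop 1] with n hn
    have hpow : (2:ℕ) ^ Nat.log 2 n ≤ n := Nat.pow_log_le_self 2 (by omega)
    have hlogle : (Nat.log 2 n : ℝ) * Real.log 2 ≤ Real.log n := by
      calc (Nat.log 2 n : ℝ) * Real.log 2 = Real.log ((2:ℝ) ^ Nat.log 2 n) := by
            rw [Real.log_pow]
        _ ≤ Real.log n := Real.log_le_log (by positivity) (by exact_mod_cast hpow)
    have hl2 : (0:ℝ) < Real.log 2 := Real.log_pos (by norm_num)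
    have hn' : (0:ℝ) < n := by exact_mod_cast hn
    rw [div_le_iff₀ hn']
    calc (Nat.log 2 n : ℝ) ≤ Real.log n / Real.log 2 := by
          rw [le_div_iff₀ hl2]; exact hlogle
      _ = 1 / Real.log 2 * (Real.log n / n) * n := by
          field_simp

/-- F-ergodic shadowing implies F-chain transitivity. -/
theorem ergodicShadowing_chainTransitive {X : Type*} (F : FuzzyMetricSpace X)
    (f : X → X) (hf : Function.Surjective f)
    (h : FErgodicShadowing F f) : FChainTransitive F f := by
  intro x y δ hδ
  obtain ⟨δ', hδ', hshad⟩ := h δ hδ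
  -- a backward orbit of y
  obtain ⟨sec, hsec⟩ := hf.hasRightInverse
  set g : ℕ → X := fun n => sec^[n] y with hgdef
  have hg0 : g 0 = y := rfl
  have hgs : ∀ n, f (g (n + 1)) = g n := by
    intro n
    simp only [hgdef, Function.iterate_succ_apply']
    exact hsec _
  -- the pseudo orbit
  set μ : ℕ → X := fun i => if i = 0 then x else
    if Nat.log 2 i % 2 = 0 then f^[i - 2 ^ Nat.log 2 i] x
    else g (2 ^ (Nat.log 2 i + 1) - 1 - i) with hμ
  have hval : ∀ i : ℕ, i ≠ 0 → μ i =
      if Nat.log 2 i % 2 = 0 then f^[i - 2 ^ Nat.log 2 i] x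
      else g (2 ^ (Nat.log 2 i + 1) - 1 - i) := by
    intro i hi; simp only [hμ, if_neg hi]
  -- exactness inside blocks
  have hexact : ∀ m i : ℕ, 2 ^ m ≤ i → i + 1 < 2 ^ (m + 1) → f (μ i) = μ (i + 1) := by
    intro m i h1 h2
    have h1m : 1 ≤ 2 ^ m := Nat.one_le_two_pow
    have hi0 : i ≠ 0 := by omega
    have hlog : Nat.log 2 i = m := Nat.log_eq_of_pow_le_of_lt_pow h1 (by omega)
    have hlog' : Nat.log 2 (i + 1) = m := Nat.log_eq_of_pow_le_of_lt_pow (by omega) h2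
    rw [hval i hi0, hval (i + 1) (by omega), hlog, hlog']
    by_cases hm : m % 2 = 0
    · rw [if_pos hm, if_pos hm, show i + 1 - 2 ^ m = (i - 2 ^ m) + 1 by omega,
        Function.iterate_succ_apply']
    · rw [if_neg hm, if_neg hm]
      have he : 2 ^ (m + 1) - 1 - i = (2 ^ (m + 1) - 1 - (i + 1)) + 1 := by omega
      rw [he, hgs]
  -- values at block endpoints
  have hstart : ∀ m : ℕ, m % 2 = 0 → μ (2 ^ m) = x := by
    intro m hm
    have h1m : 1 ≤ 2 ^ m := Nat.one_le_two_pow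
    rw [hval _ (by omega), Nat.log_pow (by norm_num : 1 < 2), if_pos hm,
      Nat.sub_self, Function.iterate_zero_apply]
  have hend : ∀ m : ℕ, m % 2 = 1 → μ (2 ^ (m + 1) - 1) = y := by
    intro m hm
    have h1m : 1 ≤ 2 ^ m := Nat.one_le_two_pow
    have hp : 2 ^ (m + 1) = 2 * 2 ^ m := by rw [pow_succ]; ring
    have hlog : Nat.log 2 (2 ^ (m + 1) - 1) = m :=
      Nat.log_eq_of_pow_le_of_lt_pow (by omega) (by omega)
    rw [hval _ (by omega), hlog, if_neg (by omega),
      show 2 ^ (m + 1) - 1 - (2 ^ (m + 1) - 1) = 0 by omega, hg0]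
  have hMone : ∀ u : X, F.M u u 1 = 1 := fun u => (F.M_eq_one_iff u u 1 one_pos).mpr rfl
  -- the bad set of the pseudo orbit
  set N : Set ℕ := {i | F.M (f (μ i)) (μ (i + 1)) 1 ≤ 1 - δ'} with hN
  have hNsub : ∀ i, i ∈ N → i = 0 ∨ ∃ k, i + 1 = 2 ^ k := by
    intro i hi
    by_contra hc
    push_neg at hc
    obtain ⟨hi0, hk⟩ := hc
    have hle := Nat.pow_log_le_self 2 hi0
    have hlt := Nat.lt_pow_succ_log_self (by norm_num : 1 < 2) i
    have h2 : i + 1 < 2 ^ (Nat.log 2 i + 1) := lt_of_le_of_ne (by omega) (hk _)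
    have := hexact (Nat.log 2 i) i hle h2
    rw [hN] at hi
    simp only [Set.mem_setOf_eq, this, hMone] at hi
    linarith
  -- N has density zero
  have hNd : densityZero N := by
    unfold densityZero
    apply tendsto_of_tendsto_of_tendsto_of_le_of_le' tendsto_const_nhds
      natLog_div_tendsto_aux
    · filter_upwards [eventually_ge_atTop 1] with n hn
      positivity
    · filter_upwards [eventually_ge_atTop 1] with n hn
      have hcard : Nat.card (N ∩ Set.Ico 1 n : Set ℕ) ≤ Nat.log 2 n := by
        have hfin : Finite (Set.Icc 1 (Nat.log 2 n) : Set ℕ) := Set.finite_Icc _ _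
        have hmem : ∀ i : ℕ, i ∈ N ∩ Set.Ico 1 n →
            Nat.log 2 (i + 1) ∈ Set.Icc 1 (Nat.log 2 n) := by
          rintro i ⟨hiN, hi1, hi2⟩
          obtain ⟨k, hk⟩ := (hNsub i hiN).resolve_left (by omega)
          rw [hk, Nat.log_pow (by norm_num : 1 < 2)]
          have hk1 : 2 ≤ 2 ^ k := by omega
          have hkk : 1 ≤ k := by
            rcases Nat.eq_zero_or_pos k with rfl | hk0
            · simp at hk
              omega
            · exact hk0
          have hkn : 2 ^ k ≤ n := by omega
          exact ⟨hkk, (Nat.le_log_iff_pow_le (by norm_num) (by omega)).mpr hkn⟩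
        have hinj : Function.Injective fun p : ↥(N ∩ Set.Ico 1 n) =>
            (⟨Nat.log 2 (p.1 + 1), hmem p.1 p.2⟩ : ↥(Set.Icc 1 (Nat.log 2 n))) := by
          rintro ⟨a, ha⟩ ⟨b, hb⟩ hab
          simp only [Subtype.mk.injEq] at hab ⊢
          obtain ⟨ka, hka⟩ := (hNsub a ha.1).resolve_left (by have := ha.2.1; omega)
          obtain ⟨kb, hkb⟩ := (hNsub b hb.1).resolve_left (by have := hb.2.1; omega)
          rw [hka, hkb, Nat.log_pow (by norm_num : 1 < 2),
            Nat.log_pow (by norm_num : 1 < 2)] at hab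
          rw [hab] at hka
          omega
        calc Nat.card (N ∩ Set.Ico 1 n : Set ℕ)
            ≤ Nat.card (Set.Icc 1 (Nat.log 2 n) : Set ℕ) :=
              Nat.card_le_card_of_injective _ hinj
          _ = Nat.log 2 n := by
              rw [← Finset.coe_Icc, Nat.card_coe_set_eq, Set.ncard_coe_finset,
                Nat.card_Icc]
              try omega
      have hn0 : (0:ℝ) ≤ (n:ℝ) := by positivity
      have hcard' : (Nat.card (N ∩ Set.Ico 1 n : Set ℕ) : ℝ) ≤ (Nat.log 2 n : ℝ) := by
        exact_mod_cast hcard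
      exact div_le_div_of_nonneg_right hcard' hn0
  -- shadow it
  obtain ⟨z, hz⟩ := hshad μ 1 one_pos hNd
  set D : Set ℕ := {i | F.M (f^[i] z) (μ i) 1 ≤ 1 - δ} with hD
  -- every large block contains a good index past its first position
  have hblock : ∃ M₀ : ℕ, ∀ m ≥ M₀, ∃ i, 2 ^ m + 1 ≤ i ∧ i < 2 ^ (m + 1) ∧ i ∉ D := by
    have hev : ∀ᶠ n : ℕ in atTop,
        (Nat.card (D ∩ Set.Ico 1 n : Set ℕ) : ℝ) / n < 1 / 4 :=
      Filter.Tendsto.eventually_lt_const (by norm_num) hz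
    obtain ⟨N₀, hN₀⟩ := eventually_atTop.mp hev
    refine ⟨N₀ + 2, fun m hm => ?_⟩
    by_contra hc
    push_neg at hc
    have hp : 2 ^ (m + 1) = 2 * 2 ^ m := by rw [pow_succ]; ring
    have h4 : (4:ℕ) ≤ 2 ^ m := by
      calc (4:ℕ) = 2 ^ 2 := rfl
        _ ≤ 2 ^ m := Nat.pow_le_pow_right (by norm_num) (by omega)
    have hsub : Set.Ico (2 ^ m + 1) (2 ^ (m + 1)) ⊆ D ∩ Set.Ico 1 (2 ^ (m + 1)) := by
      rintro i ⟨hi1, hi2⟩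
      exact ⟨hc i hi1 hi2, by omega, hi2⟩
    have hfin : (D ∩ Set.Ico 1 (2 ^ (m + 1)) : Set ℕ).Finite :=
      (Set.finite_Ico 1 (2 ^ (m + 1))).subset Set.inter_subset_right
    have hc1 : 2 ^ (m + 1) - (2 ^ m + 1) ≤
        Nat.card (D ∩ Set.Ico 1 (2 ^ (m + 1)) : Set ℕ) := by
      rw [show 2 ^ (m + 1) - (2 ^ m + 1) =
        Nat.card (Set.Ico (2 ^ m + 1) (2 ^ (m + 1)) : Set ℕ) by
          rw [← Finset.coe_Ico, Nat.card_coe_set_eq, Set.ncard_coe_finset,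
            Nat.card_Ico]]
      exact Nat.card_mono hfin hsub
    have hNlt : m + 1 ≥ N₀ := by omega
    have h2N : 2 ^ (m + 1) ≥ N₀ := le_trans hNlt (Nat.lt_two_pow_self (n := m + 1)).le
    have := hN₀ (2 ^ (m + 1)) h2N
    rw [div_lt_iff₀ (by positivity)] at this
    have hcast : ((2:ℕ) ^ (m + 1) - (2 ^ m + 1) : ℕ) =
        ((2:ℝ) ^ (m + 1) - (2 ^ m + 1)) := by
      push_cast [Nat.cast_sub (by omega : 2 ^ m + 1 ≤ 2 ^ (m + 1))]
      norm_num
    have hle : ((2:ℝ) ^ (m + 1) - (2 ^ m + 1)) ≤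
        (Nat.card (D ∩ Set.Ico 1 (2 ^ (m + 1)) : Set ℕ) : ℝ) := by
      rw [← hcast]
      exact_mod_cast hc1
    have hpr : (2:ℝ) ^ (m + 1) = 2 * 2 ^ m := by rw [pow_succ]; ring
    have h4r : (4:ℝ) ≤ 2 ^ m := by exact_mod_cast h4
    push_cast at this
    nlinarith
  obtain ⟨M₀, hM₀⟩ := hblock
  set m : ℕ := 2 * M₀ + 2 with hmdef
  obtain ⟨i, hi1, hi2, hiD⟩ := hM₀ m (by omega)
  obtain ⟨j, hj1, hj2, hjD⟩ := hM₀ (m + 1) (by omega)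
  rw [show m + 1 + 1 = m + 2 from rfl] at hj2
  have hpm : 2 ^ (m + 1) = 2 * 2 ^ m := by rw [pow_succ]; ring
  have hpm2 : 2 ^ (m + 2) = 4 * 2 ^ m := by rw [pow_succ, pow_succ]; ring
  have hpm3 : 2 ^ (m + 1 + 1) = 4 * 2 ^ m := hpm2
  have h1m : 1 ≤ 2 ^ m := Nat.one_le_two_pow
  have hij : i < j := by omega
  set e : ℕ := 2 ^ (m + 2) - 1 with hedef
  set s₀ : ℕ := 2 ^ m with hs₀def
  set w : ℕ → X := fun a => if i ≤ a ∧ a < j then f^[a] z else μ a with hw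
  refine ⟨e - s₀, by omega, fun t => w (s₀ + t), ?_, ?_, 1, one_pos, ?_⟩
  · show w s₀ = x
    simp only [hw]
    rw [if_neg (by omega), hs₀def, hstart m (by omega)]
  · show w (s₀ + (e - s₀)) = y
    simp only [hw]
    rw [show s₀ + (e - s₀) = e by omega, if_neg (by omega), hedef,
      show m + 2 = (m + 1) + 1 from rfl, hend (m + 1) (by omega)]
  · intro t ht
    show F.M (f (w (s₀ + t))) (w (s₀ + t + 1)) 1 > 1 - δ
    set a : ℕ := s₀ + t with hadef
    have ha1 : s₀ ≤ a := by omega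
    have ha2 : a < e := by omega
    rcases lt_trichotomy (a + 1) i with hcase | hcase | hcase
    · -- both inside the x-block
      simp only [hw]
      rw [if_neg (by omega), if_neg (by omega),
        hexact m a (by omega) (by omega), hMone]
      linarith
    · -- entry point into the orbit of z
      simp only [hw]
      rw [if_neg (by omega), if_pos (by omega),
        hexact m a (by omega) (by omega), hcase, F.M_symm]
      exact lt_of_not_ge (by simpa [hD] using hiD)
    · rcases lt_trichotomy (a + 1) j with hcase2 | hcase2 | hcase2
      · -- inside the orbit of z
        simp only [hw]
        rw [if_pos (by omega), if_pos (by omega), ← Function.iterate_succ_apply' f a z, Nat.succ_eq_add_one, hMone]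
        linarith
      · -- exit point
        simp only [hw]
        rw [if_pos (by omega), if_neg (by omega), ← Function.iterate_succ_apply' f a z, Nat.succ_eq_add_one, hcase2]
        exact lt_of_not_ge (by simpa [hD] using hjD)
      · -- both inside the y-block
        simp only [hw]
        rw [if_neg (by omega), if_neg (by omega),
          hexact (m + 1) a (by omega) (by omega), hMone]
        linarith
end

section
/- Let (X, M, ∗) be a fuzzy metric space and f : X → X. If f has the F-ergodic shadowing property, then for every natural number k ≥ 1 the map f^k also has the F-ergodic shadowing property. -/
open Filter Topology

variable {X : Type*}

-- Auxiliary density lemmas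

private lemma densityZero_mono' {S T : Set ℕ} (hST : S ⊆ T) (hT : densityZero T) :
    densityZero S := by
  apply squeeze_zero (fun n => by positivity) _ hT
  intro n
  have hcard : (Nat.card (S ∩ Set.Ico 1 n : Set ℕ) : ℝ) ≤ Nat.card (T ∩ Set.Ico 1 n : Set ℕ) := by
    rw [Nat.card_coe_set_eq, Nat.card_coe_set_eq]
    exact_mod_cast Set.ncard_le_ncard (Set.inter_subset_inter_left _ hST)
      ((Set.finite_Ico 1 n).inter_of_right T)
  rcases Nat.eq_zero_or_pos n with rfl | h0
  · simp
  · have hn : (0:ℝ) ≤ n := by positivity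
    exact div_le_div_of_nonneg_right hcard hn

private lemma densityZero_image_affine' {D : Set ℕ} (m : ℕ) (hD : densityZero D) :
    densityZero ((fun q => q * (m + 1) + m) '' D) := by
  have hinj : Function.Injective (fun q : ℕ => q * (m + 1) + m) := by
    intro a b hab
    simp only [] at hab
    have hab2 : a * (m + 1) = b * (m + 1) := Nat.add_right_cancel hab
    exact Nat.eq_of_mul_eq_mul_right (Nat.succ_pos m) hab2
  have hbound : ∀ n : ℕ,
      (Nat.card (((fun q => q * (m+1) + m) '' D) ∩ Set.Ico 1 n : Set ℕ) : ℝ)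
      ≤ (Nat.card (D ∩ Set.Ico 1 n : Set ℕ) : ℝ) + 1 := by
    intro n
    rw [Nat.card_coe_set_eq, Nat.card_coe_set_eq]
    have h1 : ((fun q => q * (m+1) + m) '' D) ∩ Set.Ico 1 n ⊆
        (fun q => q * (m+1) + m) '' (D ∩ Set.Iio n) := by
      rintro x ⟨⟨q, hq, rfl⟩, hx1, hx2⟩
      refine ⟨q, ⟨hq, ?_⟩, rfl⟩
      have hle : q ≤ q * (m+1) := Nat.le_mul_of_pos_right q (Nat.succ_pos m)
      exact lt_of_le_of_lt (hle.trans (Nat.le_add_right _ m)) hx2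
    have h2 : D ∩ Set.Iio n ⊆ insert 0 (D ∩ Set.Ico 1 n) := by
      rintro q ⟨hq, hqn⟩
      rcases Nat.eq_zero_or_pos q with rfl | hq1
      · exact Set.mem_insert _ _
      · exact Set.mem_insert_of_mem _ ⟨hq, hq1, hqn⟩
    have c1 : (((fun q => q * (m+1) + m) '' D) ∩ Set.Ico 1 n).ncard
        ≤ (D ∩ Set.Iio n).ncard := by
      calc (((fun q => q * (m+1) + m) '' D) ∩ Set.Ico 1 n).ncard
          ≤ ((fun q => q * (m+1) + m) '' (D ∩ Set.Iio n)).ncard :=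
            Set.ncard_le_ncard h1 (((Set.finite_Iio n).inter_of_right D).image _)
        _ = (D ∩ Set.Iio n).ncard := Set.ncard_image_of_injective _ hinj
    have c2 : (D ∩ Set.Iio n).ncard ≤ (D ∩ Set.Ico 1 n).ncard + 1 := by
      calc (D ∩ Set.Iio n).ncard ≤ (insert 0 (D ∩ Set.Ico 1 n)).ncard :=
            Set.ncard_le_ncard h2 (((Set.finite_Ico 1 n).inter_of_right D).insert 0)
        _ ≤ (D ∩ Set.Ico 1 n).ncard + 1 := Set.ncard_insert_le _ _
    exact_mod_cast c1.trans c2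
  have hg : Tendsto (fun n : ℕ =>
      (Nat.card (D ∩ Set.Ico 1 n : Set ℕ) : ℝ) / n + 1 / n) atTop (nhds 0) := by
    simpa using hD.add tendsto_one_div_atTop_nhds_zero_nat
  apply squeeze_zero (fun n => by positivity) _ hg
  intro n
  rcases Nat.eq_zero_or_pos n with rfl | h0
  · simp
  · have hn : (0:ℝ) ≤ n := by positivity
    rw [← add_div]
    exact div_le_div_of_nonneg_right (hbound n) hn

private lemma densityZero_preimage_mul' {B : Set ℕ} (k : ℕ) (hk : 0 < k) (hB : densityZero B) :
    densityZero {q | k * q ∈ B} := by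
  have hinj : Function.Injective (fun q : ℕ => k * q) := fun a b hab =>
    Nat.eq_of_mul_eq_mul_left hk hab
  have hbound : ∀ n : ℕ, (Nat.card ({q | k * q ∈ B} ∩ Set.Ico 1 n : Set ℕ) : ℝ)
      ≤ (Nat.card (B ∩ Set.Ico 1 (k * n) : Set ℕ) : ℝ) := by
    intro n
    rw [Nat.card_coe_set_eq, Nat.card_coe_set_eq]
    have h1 : (fun q : ℕ => k * q) '' ({q | k * q ∈ B} ∩ Set.Ico 1 n)
        ⊆ B ∩ Set.Ico 1 (k * n) := by
      rintro x ⟨q, ⟨hq, hq1, hq2⟩, rfl⟩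
      refine ⟨hq, Nat.one_le_iff_ne_zero.mpr (by positivity), ?_⟩
      exact Nat.mul_lt_mul_of_le_of_lt (le_refl k) hq2 hk
    have h3 := Set.ncard_le_ncard h1 ((Set.finite_Ico 1 (k*n)).inter_of_right B)
    rw [Set.ncard_image_of_injective _ hinj] at h3
    exact_mod_cast h3
  have htop : Tendsto (fun n : ℕ => k * n) atTop atTop :=
    tendsto_atTop_mono (fun n => Nat.le_mul_of_pos_left n hk) tendsto_id
  have hg : Tendsto (fun n : ℕ =>
      (k : ℝ) * ((Nat.card (B ∩ Set.Ico 1 (k * n) : Set ℕ) : ℝ) / ((k * n : ℕ) : ℝ)))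
      atTop (nhds 0) := by
    have h4 := (hB.comp htop).const_mul (k : ℝ)
    simpa [Function.comp] using h4
  apply squeeze_zero (fun n => by positivity) _ hg
  intro n
  rcases Nat.eq_zero_or_pos n with rfl | h0
  · simp
  · have hn : (0:ℝ) < n := by exact_mod_cast h0
    have hkr : (0:ℝ) < k := by exact_mod_cast hk
    have key : (k : ℝ) * ((Nat.card (B ∩ Set.Ico 1 (k * n) : Set ℕ) : ℝ) / ((k * n : ℕ) : ℝ))
        = (Nat.card (B ∩ Set.Ico 1 (k * n) : Set ℕ) : ℝ) / n := by
      push_cast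
      field_simp
    rw [key]
    exact div_le_div_of_nonneg_right (hbound n) hn.le

/-- If `f` has the F-ergodic shadowing property, so does `f^k` for `k ≥ 1`. -/
theorem ergodicShadowing_iterate {X : Type*} (F : FuzzyMetricSpace X)
    (f : X → X) (k : ℕ) (hk : 1 ≤ k)
    (h : FErgodicShadowing F f) : FErgodicShadowing F (f^[k]) := by
  obtain ⟨m, rfl⟩ : ∃ m, k = m + 1 := ⟨k - 1, by omega⟩
  intro ε hε
  obtain ⟨δ, hδ, hshadow⟩ := h ε hε
  refine ⟨δ, hδ, ?_⟩
  intro μ T₀ hT₀ hμ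
  set ν : ℕ → X := fun i => f^[i % (m+1)] (μ (i / (m+1))) with hν
  have hsub : {i | F.M (f (ν i)) (ν (i+1)) T₀ ≤ 1 - δ} ⊆
      (fun q => q * (m+1) + m) '' {i | F.M (f^[m+1] (μ i)) (μ (i+1)) T₀ ≤ 1 - δ} := by
    intro i hi
    by_cases hmod : i % (m+1) = m
    · refine ⟨i / (m+1), ?_, ?_⟩
      · have h1 : f (ν i) = f^[m+1] (μ (i/(m+1))) := by
          simp only [hν]
          rw [hmod]
          exact (Function.iterate_succ_apply' f m _).symm
        have e : i + 1 = (m+1) * (i / (m+1) + 1) := by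
          conv_lhs => rw [← Nat.div_add_mod i (m+1)]
          rw [hmod, Nat.mul_succ]
          ring
        have h2 : ν (i+1) = μ (i/(m+1) + 1) := by
          simp only [hν]
          rw [e, Nat.mul_mod_right, Nat.mul_div_cancel_left _ (Nat.succ_pos m),
            Function.iterate_zero_apply]
        show F.M (f^[m+1] (μ (i/(m+1)))) (μ (i/(m+1) + 1)) T₀ ≤ 1 - δ
        rw [← h1, ← h2]
        exact hi
      · show i / (m+1) * (m+1) + m = i
        calc i / (m+1) * (m+1) + m = (m+1) * (i / (m+1)) + i % (m+1) := by
              rw [hmod, mul_comm]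
          _ = i := Nat.div_add_mod i (m+1)
    · exfalso
      have hlt : i % (m+1) < m :=
        lt_of_le_of_ne (Nat.lt_succ_iff.mp (Nat.mod_lt i (Nat.succ_pos m))) hmod
      have e : i + 1 = (i % (m+1) + 1) + (m+1) * (i / (m+1)) := by
        conv_lhs => rw [← Nat.div_add_mod i (m+1)]
        ring
      have hmod2 : (i+1) % (m+1) = i % (m+1) + 1 := by
        rw [e, Nat.add_mul_mod_self_left, Nat.mod_eq_of_lt (by omega)]
      have hdiv2 : (i+1) / (m+1) = i / (m+1) := by
        rw [e, Nat.add_mul_div_left _ _ (Nat.succ_pos m), Nat.div_eq_of_lt (by omega), zero_add]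
      have heq : ν (i+1) = f (ν i) := by
        simp only [hν]
        rw [hmod2, hdiv2, Function.iterate_succ_apply']
      simp only [Set.mem_setOf_eq] at hi
      rw [heq] at hi
      have hone : F.M (f (ν i)) (f (ν i)) T₀ = 1 :=
        (F.M_eq_one_iff _ _ T₀ hT₀).mpr rfl
      rw [hone] at hi
      linarith
  have hν_density : densityZero {i | F.M (f (ν i)) (ν (i+1)) T₀ ≤ 1 - δ} :=
    densityZero_mono' hsub (densityZero_image_affine' m hμ)
  obtain ⟨x, hx⟩ := hshadow ν T₀ hT₀ hν_density
  refine ⟨x, densityZero_mono' ?_ (densityZero_preimage_mul' (m+1) (Nat.succ_pos m) hx)⟩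
  intro q hq
  show (m+1) * q ∈ {i | F.M (f^[i] x) (ν i) T₀ ≤ 1 - ε}
  have h1 : ν ((m+1) * q) = μ q := by
    simp only [hν]
    rw [Nat.mul_mod_right, Nat.mul_div_cancel_left _ (Nat.succ_pos m),
      Function.iterate_zero_apply]
  show F.M (f^[(m+1)*q] x) (ν ((m+1)*q)) T₀ ≤ 1 - ε
  rw [h1, Function.iterate_mul]
  exact hq
end

section
/- Let (X, M, ∗) be a compact, complete fuzzy metric space and f : X → X a fuzzy continuous onto map. If f has the F-ergodic shadowing property, then f has the F-shadowing property. -/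
open Filter Topology

variable {X : Type*}

namespace FMSAux

variable {X : Type*} (F : FuzzyMetricSpace X)

lemma M_self (x : X) {t : ℝ} (ht : 0 < t) : F.M x x t = 1 :=
  (F.M_eq_one_iff x x t ht).mpr rfl

lemma M_mem (x y : X) {t : ℝ} (ht : 0 < t) : F.M x y t ∈ Set.Icc (0:ℝ) 1 :=
  ⟨(F.M_pos x y t ht).le, F.M_le_one x y t ht⟩

lemma M_mono (x y : X) {t s : ℝ} (ht : 0 < t) (hts : t ≤ s) :
    F.M x y t ≤ F.M x y s := by
  rcases eq_or_lt_of_le hts with rfl | hlt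
  · exact le_refl _
  · have h1 : 0 < s - t := by linarith
    have := F.M_triangle x y y t (s - t) ht h1
    rw [M_self F y h1, F.star_one _ (M_mem F x y ht)] at this
    calc F.M x y t ≤ F.M x y (t + (s - t)) := this
      _ = F.M x y s := by ring_nf

/-- Continuity of the t-norm at (1,1): values of star near 1. -/
lemma star_near_one {ε : ℝ} (hε : 0 < ε) :
    ∃ θ ∈ Set.Ioo (0:ℝ) 1, ∀ a b : ℝ, a ∈ Set.Icc (0:ℝ) 1 → b ∈ Set.Icc (0:ℝ) 1 →
      1 - θ < a → 1 - θ < b → 1 - ε < F.star a b := by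
  have h11 : ((1:ℝ), (1:ℝ)) ∈ Set.Icc (0:ℝ) 1 ×ˢ Set.Icc (0:ℝ) 1 := by
    constructor <;> exact ⟨zero_le_one, le_refl 1⟩
  have hc : ContinuousWithinAt (fun p : ℝ × ℝ => F.star p.1 p.2)
      (Set.Icc (0:ℝ) 1 ×ˢ Set.Icc (0:ℝ) 1) (1, 1) := F.star_cont _ h11
  have hone : F.star 1 1 = 1 := F.star_one 1 ⟨zero_le_one, le_refl 1⟩
  rw [ContinuousWithinAt] at hc
  rw [hone] at hc
  have := Metric.tendsto_nhdsWithin_nhds.mp hc ε hε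
  obtain ⟨r, hr, hball⟩ := this
  refine ⟨min (r/2) (1/2), ⟨by positivity, by
    have : min (r/2) (1/2) ≤ 1/2 := min_le_right _ _
    linarith⟩, ?_⟩
  intro a b ha hb hla hlb
  have hda : dist (a, b) ((1:ℝ), (1:ℝ)) < r := by
    rw [Prod.dist_eq]
    have h2 : min (r/2) (1/2) ≤ r/2 := min_le_left _ _
    have hda : dist a 1 < r := by
      rw [Real.dist_eq, abs_lt]; constructor <;> [linarith [ha.2]; linarith [ha.2]]
    have hdb : dist b 1 < r := by
      rw [Real.dist_eq, abs_lt]; constructor <;> [linarith [hb.2]; linarith [hb.2]]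
    exact max_lt hda hdb
  have := hball ⟨ha, hb⟩ hda
  rw [Real.dist_eq, abs_lt] at this
  linarith [this.1]

end FMSAux
namespace FMSAux

variable {X : Type*} (F : FuzzyMetricSpace X)

lemma iter_cont {f : X → X} (hcont : FuzzyContinuous F f) (i : ℕ) :
    FuzzyContinuous F (f^[i]) := by
  induction i with
  | zero =>
    intro x₀ ε hε t ht
    exact ⟨ε, hε, t, ht, fun x hx => by simpa using hx⟩
  | succ n ih =>
    intro x₀ ε hε t ht
    obtain ⟨δ₁, hδ₁, t₁, ht₁, h₁⟩ := hcont (f^[n] x₀) ε hε t ht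
    obtain ⟨δ₂, hδ₂, t₂, ht₂, h₂⟩ := ih x₀ δ₁ hδ₁ t₁ ht₁
    refine ⟨δ₂, hδ₂, t₂, ht₂, fun x hx => ?_⟩
    have := h₁ (f^[n] x) (h₂ x hx)
    simpa [Function.iterate_succ_apply'] using this

lemma ball_open (x : X) {r t : ℝ} (hr : 0 < r) (hr1 : r < 1) (ht : 0 < t) :
    IsOpen[fuzzyTopology F] (fuzzyBall F x r t) :=
  TopologicalSpace.GenerateOpen.basic _ ⟨x, r, t, hr, hr1, ht, rfl⟩

lemma mem_ball_self (x : X) {r t : ℝ} (hr : 0 < r) (ht : 0 < t) :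
    x ∈ fuzzyBall F x r t := by
  show F.M x x t > 1 - r
  rw [M_self F x ht]; linarith

/-- Uniform continuity from compactness. -/
lemma ucont (hcompact : @CompactSpace X (fuzzyTopology F))
    {f : X → X} (hcont : FuzzyContinuous F f) :
    ∀ ε ∈ Set.Ioo (0:ℝ) 1, ∀ t > (0:ℝ), ∃ δ ∈ Set.Ioo (0:ℝ) 1, ∃ t' > (0:ℝ),
      ∀ x y : X, 1 - δ < F.M x y t' → 1 - ε < F.M (f x) (f y) t := by
  intro ε hε t ht
  rcases isEmpty_or_nonempty X with hX | hX
  · exact ⟨1/2, by norm_num, 1, one_pos, fun x => (hX.false x).elim⟩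
  letI := fuzzyTopology F
  haveI := hcompact
  obtain ⟨θ₁, hθ₁, hstar₁⟩ := star_near_one F hε.1
  -- pointwise continuity data
  have hpt : ∀ x₀ : X, ∃ δ₀ ∈ Set.Ioo (0:ℝ) 1, ∃ t₀ > (0:ℝ),
      ∀ x : X, 1 - δ₀ < F.M x x₀ t₀ → 1 - θ₁ < F.M (f x) (f x₀) (t/2) :=
    fun x₀ => hcont x₀ θ₁ hθ₁ (t/2) (by linarith)
  choose δ₀ hδ₀ t₀ ht₀ hf using hpt
  -- radius for the cover
  have hrad : ∀ x₀ : X, ∃ η ∈ Set.Ioo (0:ℝ) 1, ∀ a b : ℝ,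
      a ∈ Set.Icc (0:ℝ) 1 → b ∈ Set.Icc (0:ℝ) 1 →
      1 - η < a → 1 - η < b → 1 - δ₀ x₀ < F.star a b :=
    fun x₀ => star_near_one F (hδ₀ x₀).1
  choose η hη hηstar using hrad
  set r : X → ℝ := fun x₀ => min (η x₀) (δ₀ x₀) with hrdef
  have hrpos : ∀ x₀, 0 < r x₀ := fun x₀ => lt_min (hη x₀).1 (hδ₀ x₀).1
  have hrlt1 : ∀ x₀, r x₀ < 1 := fun x₀ => lt_of_le_of_lt (min_le_left _ _) (hη x₀).2
  -- cover
  have hcover : Set.univ ⊆ ⋃ x₀ : X, fuzzyBall F x₀ (r x₀) (t₀ x₀ / 2) := by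
    intro x _
    exact Set.mem_iUnion.mpr ⟨x, mem_ball_self F x (hrpos x) (by linarith [ht₀ x])⟩
  obtain ⟨s, hs⟩ := isCompact_univ.elim_finite_subcover
    (fun x₀ : X => fuzzyBall F x₀ (r x₀) (t₀ x₀ / 2))
    (fun x₀ => ball_open F x₀ (hrpos x₀) (hrlt1 x₀) (by linarith [ht₀ x₀])) hcover
  have hsne : s.Nonempty := by
    rcases hX with ⟨x⟩
    by_contra hne
    rw [Finset.not_nonempty_iff_eq_empty] at hne
    have := hs (Set.mem_univ x)
    simp [hne] at this
  set δ : ℝ := min (s.inf' hsne r) (1/2) with hδdef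
  set t' : ℝ := s.inf' hsne (fun x₀ => t₀ x₀ / 2) with ht'def
  have hδpos : 0 < δ := by
    apply lt_min _ (by norm_num)
    rw [Finset.lt_inf'_iff]
    exact fun x₀ _ => hrpos x₀
  have ht'pos : 0 < t' := by
    rw [ht'def, Finset.lt_inf'_iff]
    exact fun x₀ _ => by linarith [ht₀ x₀]
  refine ⟨δ, ⟨hδpos, lt_of_le_of_lt (min_le_right _ _) (by norm_num)⟩, t', ht'pos, ?_⟩
  intro x y hxy
  obtain ⟨x₀, hx₀s, hxball⟩ : ∃ x₀ ∈ s, x ∈ fuzzyBall F x₀ (r x₀) (t₀ x₀ / 2) := by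
    have := hs (Set.mem_univ x)
    simpa using this
  have hxb : 1 - r x₀ < F.M x₀ x (t₀ x₀ / 2) := hxball
  have ht₀pos := ht₀ x₀
  have ht'le : t' ≤ t₀ x₀ / 2 := Finset.inf'_le _ hx₀s
  have hδle : δ ≤ r x₀ := le_trans (min_le_left _ _) (Finset.inf'_le _ hx₀s)
  -- x is close to x₀ at scale t₀ x₀
  have hx_close : 1 - δ₀ x₀ < F.M x x₀ (t₀ x₀) := by
    have h1 : F.M x₀ x (t₀ x₀ / 2) ≤ F.M x₀ x (t₀ x₀) :=
      M_mono F _ _ (by linarith) (by linarith)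
    have h2 : 1 - r x₀ < F.M x₀ x (t₀ x₀) := lt_of_lt_of_le hxb h1
    rw [F.M_symm]
    have : r x₀ ≤ δ₀ x₀ := min_le_right _ _
    linarith
  -- y is close to x₀ at scale t₀ x₀
  have hy_close : 1 - δ₀ x₀ < F.M y x₀ (t₀ x₀) := by
    have htri := F.M_triangle x₀ x y (t₀ x₀ / 2) t' (by linarith) ht'pos
    have hstar := hηstar x₀ (F.M x₀ x (t₀ x₀ / 2)) (F.M x y t')
      (M_mem F _ _ (by linarith)) (M_mem F _ _ ht'pos)
      (by have : r x₀ ≤ η x₀ := min_le_left _ _; linarith)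
      (by have : r x₀ ≤ η x₀ := min_le_left _ _; linarith)
    have hmono : F.M x₀ y (t₀ x₀ / 2 + t') ≤ F.M x₀ y (t₀ x₀) :=
      M_mono F _ _ (by linarith) (by linarith)
    rw [F.M_symm]
    linarith
  have hfx := hf x₀ x hx_close
  have hfy := hf x₀ y hy_close
  have htri := F.M_triangle (f x) (f x₀) (f y) (t/2) (t/2) (by linarith) (by linarith)
  have hstar := hstar₁ (F.M (f x) (f x₀) (t/2)) (F.M (f x₀) (f y) (t/2))
    (M_mem F _ _ (by linarith)) (M_mem F _ _ (by linarith))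
    hfx (by rw [F.M_symm]; exact hfy)
  have : t/2 + t/2 = t := by ring
  rw [this] at htri
  linarith

end FMSAux
namespace FMSAux

lemma dz_card_nonneg (A : Set ℕ) (n : ℕ) :
    (0:ℝ) ≤ (Nat.card (A ∩ Set.Ico 1 n : Set ℕ) : ℝ) / n := by positivity

lemma inter_ico_finite (A : Set ℕ) (n : ℕ) : (A ∩ Set.Ico 1 n).Finite :=
  (Set.finite_Ico 1 n).subset Set.inter_subset_right

lemma dz_empty : densityZero (∅ : Set ℕ) := by
  have : (fun n : ℕ => (Nat.card ((∅:Set ℕ) ∩ Set.Ico 1 n : Set ℕ) : ℝ) / n)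
      = fun _ => (0:ℝ) := by
    funext n; simp
  unfold densityZero
  rw [this]
  exact tendsto_const_nhds

lemma dz_mono {A B : Set ℕ} (hAB : A ⊆ B) (hB : densityZero B) : densityZero A := by
  apply squeeze_zero (dz_card_nonneg A) _ hB
  intro n
  apply div_le_div_of_nonneg_right _ (Nat.cast_nonneg n)
  exact_mod_cast Nat.card_mono (inter_ico_finite B n) (Set.inter_subset_inter_left _ hAB)

lemma dz_lt {B : Set ℕ} (hB : densityZero B) {c : ℝ} (hc : 0 < c) :
    ∃ N : ℕ, ∀ n ≥ N, (Nat.card (B ∩ Set.Ico 1 n : Set ℕ) : ℝ) / n < c := by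
  have := (Metric.tendsto_atTop.mp hB) c hc
  obtain ⟨N, hN⟩ := this
  refine ⟨N, fun n hn => ?_⟩
  have := hN n hn
  rw [Real.dist_eq, sub_zero] at this
  exact lt_of_abs_lt this

lemma finset_card_le_natCard {A : Set ℕ} {G : Finset ℕ} (h : ↑G ⊆ A) (hfin : A.Finite) :
    G.card ≤ Nat.card A := by
  have h1 : Nat.card (↑G : Set ℕ) = G.card := by
    rw [Nat.card_coe_set_eq, Set.ncard_coe_finset]
  rw [← h1]
  exact Nat.card_mono hfin h

lemma natCard_le_finset_card {A : Set ℕ} {G : Finset ℕ} (h : A ⊆ ↑G) :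
    Nat.card A ≤ G.card := by
  have h1 : Nat.card (↑G : Set ℕ) = G.card := by
    rw [Nat.card_coe_set_eq, Set.ncard_coe_finset]
  rw [← h1]
  exact Nat.card_mono G.finite_toSet h

/-- Pigeonhole: a density-zero set cannot meet `[kp, kp+n]` for every `k ≥ 1`. -/
lemma dz_good_block {B : Set ℕ} (hB : densityZero B) {p n : ℕ} (hnp : n < p) :
    ∃ k ≥ 1, ∀ idx, k*p ≤ idx → idx ≤ k*p + n → idx ∉ B := by
  by_contra hcon
  push_neg at hcon
  have hp : 0 < p := lt_of_le_of_lt (Nat.zero_le n) hnp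
  have hcon2 : ∀ k : ℕ, ∃ idx, 1 ≤ k → (k*p ≤ idx ∧ idx ≤ k*p + n ∧ idx ∈ B) := by
    intro k
    by_cases hk : 1 ≤ k
    · obtain ⟨idx, h1, h2, h3⟩ := hcon k hk
      exact ⟨idx, fun _ => ⟨h1, h2, h3⟩⟩
    · exact ⟨0, fun h => absurd h hk⟩
  choose g hg using hcon2
  -- g is strictly monotone on [1, ∞)
  have hmono : ∀ k k', 1 ≤ k → k < k' → g k < g k' := by
    intro k k' hk hkk'
    have h1 := hg k hk
    have h2 := hg k' (le_trans hk hkk'.le)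
    calc g k ≤ k*p + n := h1.2.1
      _ < (k+1)*p := by nlinarith
      _ ≤ k'*p := Nat.mul_le_mul_right p hkk'
      _ ≤ g k' := h2.1
  obtain ⟨N, hN⟩ := dz_lt hB (c := 1/(2*p)) (by positivity)
  set K : ℕ := max N 2 with hK
  have hK2 : 2 ≤ K := le_max_right _ _
  have hKN : N ≤ K := le_max_left _ _
  -- the image finset
  set G : Finset ℕ := (Finset.Ico 1 K).image g with hG
  have hGcard : G.card = K - 1 := by
    rw [hG, Finset.card_image_of_injOn, Nat.card_Ico]
    intro a ha b hb hab
    simp only [Finset.coe_Ico, Set.mem_Ico] at ha hb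
    rcases lt_trichotomy a b with h | h | h
    · exact absurd hab (hmono a b ha.1 h).ne
    · exact h
    · exact absurd hab.symm (hmono b a hb.1 h).ne
  have hGsub : ↑G ⊆ B ∩ Set.Ico 1 (K*p) := by
    intro a ha
    rw [hG, Finset.coe_image] at ha
    obtain ⟨k, hk, rfl⟩ := ha
    simp only [Finset.coe_Ico, Set.mem_Ico] at hk
    have h1 := hg k hk.1
    refine ⟨h1.2.2, ?_, ?_⟩
    · calc 1 ≤ p := hp
        _ = 1*p := (one_mul p).symm
        _ ≤ k*p := Nat.mul_le_mul_right p hk.1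
        _ ≤ g k := h1.1
    · calc g k ≤ k*p + n := h1.2.1
        _ < (k+1)*p := by nlinarith
        _ ≤ K*p := Nat.mul_le_mul_right p hk.2
  have hcard : (K - 1 : ℕ) ≤ Nat.card (B ∩ Set.Ico 1 (K*p) : Set ℕ) := by
    rw [← hGcard]
    exact finset_card_le_natCard hGsub (inter_ico_finite B (K*p))
  have hKp : (N:ℕ) ≤ K*p := le_trans hKN (Nat.le_mul_of_pos_right K hp)
  have hlt := hN (K*p) hKp
  have hKppos : (0:ℝ) < (K*p : ℕ) := by
    have : 0 < K*p := Nat.mul_pos (lt_of_lt_of_le two_pos hK2) hp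
    exact_mod_cast this
  have h2 : ((K - 1 : ℕ) : ℝ) / ((K*p : ℕ) : ℝ) < 1/(2*p) := by
    apply lt_of_le_of_lt _ hlt
    apply div_le_div_of_nonneg_right _ hKppos.le
    exact_mod_cast hcard
  have hcast : ((K - 1 : ℕ) : ℝ) = (K:ℝ) - 1 := by
    have : 1 ≤ K := le_trans one_le_two hK2
    push_cast [this]; ring
  rw [hcast] at h2
  have hKcast : ((K*p : ℕ) : ℝ) = (K:ℝ) * p := by push_cast; ring
  rw [hKcast] at h2
  have hppos : (0:ℝ) < p := by exact_mod_cast hp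
  have hKpos : (2:ℝ) ≤ K := by exact_mod_cast hK2
  rw [div_lt_div_iff₀ (by positivity) (by positivity)] at h2
  nlinarith

/-- A density-zero set must miss infinitely many points of any set of lower density ≥ 1/4. -/
lemma dz_hits {B P : Set ℕ} (hB : densityZero B)
    (hP : ∀ K : ℕ, ∃ n : ℕ, K ≤ n ∧ (n:ℝ)/4 ≤ (Nat.card (P ∩ Set.Ico 1 n : Set ℕ) : ℝ)) :
    ∀ m : ℕ, ∃ i ∈ P, i ∉ B ∧ m ≤ i := by
  intro m
  by_contra hcon
  push_neg at hcon
  obtain ⟨N, hN⟩ := dz_lt hB (c := 1/8) (by norm_num)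
  obtain ⟨n, hn1, hn2⟩ := hP (max N (8*m + 8))
  have hnN : N ≤ n := le_trans (le_max_left _ _) hn1
  have hnm : 8*m + 8 ≤ n := le_trans (le_max_right _ _) hn1
  have hsub : P ∩ Set.Ico 1 n ⊆ (B ∩ Set.Ico 1 n) ∪ Set.Ico 0 m := by
    rintro i ⟨hiP, hiIco⟩
    by_cases hiB : i ∈ B
    · exact Or.inl ⟨hiB, hiIco⟩
    · exact Or.inr ⟨Nat.zero_le i, hcon i hiP hiB⟩
  have hcard : Nat.card (P ∩ Set.Ico 1 n : Set ℕ)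
      ≤ Nat.card (B ∩ Set.Ico 1 n : Set ℕ) + m := by
    calc Nat.card (P ∩ Set.Ico 1 n : Set ℕ)
        ≤ Nat.card ((B ∩ Set.Ico 1 n) ∪ Set.Ico 0 m : Set ℕ) :=
          Nat.card_mono ((inter_ico_finite B n).union (Set.finite_Ico 0 m)) hsub
      _ ≤ Nat.card (B ∩ Set.Ico 1 n : Set ℕ) + Nat.card (Set.Ico 0 m : Set ℕ) := by
          rw [Nat.card_coe_set_eq, Nat.card_coe_set_eq, Nat.card_coe_set_eq]
          exact Set.ncard_union_le _ _
      _ ≤ Nat.card (B ∩ Set.Ico 1 n : Set ℕ) + m := by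
          have : Nat.card (Set.Ico 0 m : Set ℕ) = m := by
            simp [Nat.card_eq_card_toFinset]
          omega
  have hnpos : (0:ℝ) < n := by
    have : 0 < n := by omega
    exact_mod_cast this
  have hlt := hN n hnN
  rw [div_lt_iff₀ hnpos] at hlt
  have hcardR : (Nat.card (P ∩ Set.Ico 1 n : Set ℕ) : ℝ)
      ≤ (Nat.card (B ∩ Set.Ico 1 n : Set ℕ) : ℝ) + m := by exact_mod_cast hcard
  have hmn : (8:ℝ)*m + 8 ≤ n := by exact_mod_cast hnm
  linarith

end FMSAux
namespace FMSAux

lemma natSqrt_tendsto : Filter.Tendsto (fun n : ℕ => Real.sqrt n) atTop atTop := by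
  rw [tendsto_atTop_atTop]
  intro b
  refine ⟨Nat.ceil ((max b 0)^2), fun n hn => ?_⟩
  have h1 : (max b 0)^2 ≤ (n:ℝ) := le_trans (Nat.le_ceil _) (by exact_mod_cast hn)
  calc b ≤ max b 0 := le_max_left _ _
    _ = Real.sqrt ((max b 0)^2) := (Real.sqrt_sq (le_max_right _ _)).symm
    _ ≤ Real.sqrt n := Real.sqrt_le_sqrt h1

lemma bound_tendsto : Filter.Tendsto
    (fun n : ℕ => (2*(Nat.sqrt n : ℝ) + 4) / n) atTop (nhds 0) := by
  apply squeeze_zero (g := fun n : ℕ => 6 / Real.sqrt n)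
  · intro n
    rcases Nat.eq_zero_or_pos n with rfl | hn
    · simp
    · positivity
  · intro n
    rcases Nat.eq_zero_or_pos n with rfl | hn
    · simp
    · have hs : (Nat.sqrt n : ℝ) ≤ Real.sqrt n := by
        calc (Nat.sqrt n : ℝ) = Real.sqrt ((Nat.sqrt n : ℝ)^2) :=
              (Real.sqrt_sq (Nat.cast_nonneg _)).symm
          _ ≤ Real.sqrt n := Real.sqrt_le_sqrt (by exact_mod_cast Nat.sqrt_le' n)
      have h1 : (1:ℝ) ≤ Real.sqrt n := by
        calc (1:ℝ) = Real.sqrt 1 := Real.sqrt_one.symm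
          _ ≤ Real.sqrt n := Real.sqrt_le_sqrt (by exact_mod_cast hn)
      have hnn : (0:ℝ) < n := by exact_mod_cast hn
      have hsq : Real.sqrt n * Real.sqrt n = n := Real.mul_self_sqrt (by positivity)
      rw [div_le_div_iff₀ hnn (by linarith)]
      nlinarith
  · exact Filter.Tendsto.div_atTop tendsto_const_nhds natSqrt_tendsto

/-- The boundary set of the block construction has density zero. -/
lemma dz_badset : densityZero {i : ℕ | ∃ k : ℕ, i+1 = k*k+k ∨ i+1 = (k+1)*(k+1)} := by
  set Bad : Set ℕ := {i : ℕ | ∃ k : ℕ, i+1 = k*k+k ∨ i+1 = (k+1)*(k+1)} with hBad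
  apply squeeze_zero (dz_card_nonneg Bad) _ bound_tendsto
  intro n
  apply div_le_div_of_nonneg_right _ (Nat.cast_nonneg n)
  have key : Nat.card (Bad ∩ Set.Ico 1 n : Set ℕ) ≤ 2*(Nat.sqrt n) + 4 := by
    set G : Finset ℕ := (Finset.range (Nat.sqrt n + 2)).biUnion
      (fun k => {k*k+k-1, (k+1)*(k+1)-1}) with hG
    have hsub : Bad ∩ Set.Ico 1 n ⊆ ↑G := by
      rintro i ⟨⟨k, hk⟩, hi1, hi2⟩
      simp only [hG, Finset.coe_biUnion, Finset.coe_range, Set.mem_iUnion,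
        Finset.coe_insert, Finset.coe_singleton, Set.mem_insert_iff,
        Set.mem_singleton_iff, Set.mem_Iio]
      rcases hk with hk | hk
      · have hk1 : 1 ≤ k := by nlinarith
        have hkk : k*k ≤ i := by nlinarith
        have hklt : k < Nat.sqrt n + 2 := by
          have : k ≤ Nat.sqrt n := Nat.le_sqrt.mpr (by omega)
          omega
        exact ⟨k, hklt, Or.inl (by omega)⟩
      · have hklt : k < Nat.sqrt n + 2 := by
          have : k + 1 ≤ Nat.sqrt n := Nat.le_sqrt.mpr (by nlinarith [le_of_lt hi2])
          omega
        exact ⟨k, hklt, Or.inr (by omega)⟩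
    calc Nat.card (Bad ∩ Set.Ico 1 n : Set ℕ) ≤ G.card := natCard_le_finset_card hsub
      _ ≤ ∑ _k ∈ Finset.range (Nat.sqrt n + 2), 2 := by
          apply le_trans (Finset.card_biUnion_le)
          apply Finset.sum_le_sum
          intro k _
          apply le_trans (Finset.card_insert_le _ _)
          simp
      _ = 2*(Nat.sqrt n) + 4 := by
          rw [Finset.sum_const, Finset.card_range, smul_eq_mul]; ring
  exact_mod_cast key

/-- Lower bound on the count of the union of intervals `[k²+ok, k²+ok+k)`. -/
lemma part_count (o : ℕ) (ho : o ≤ 1) :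
    ∀ K : ℕ, ∃ n : ℕ, K ≤ n ∧ (n:ℝ)/4 ≤
      (Nat.card ({i : ℕ | ∃ k, 1 ≤ k ∧ k*k + o*k ≤ i ∧ i < k*k + o*k + k}
        ∩ Set.Ico 1 n : Set ℕ) : ℝ) := by
  intro K
  set P : Set ℕ := {i : ℕ | ∃ k, 1 ≤ k ∧ k*k + o*k ≤ i ∧ i < k*k + o*k + k} with hP
  set KK : ℕ := max K 1 with hKK
  have hKK1 : 1 ≤ KK := le_max_right _ _
  refine ⟨(KK+1)*(KK+1), ?_, ?_⟩
  · calc K ≤ KK := le_max_left _ _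
      _ ≤ (KK+1)*(KK+1) := by nlinarith
  · set n : ℕ := (KK+1)*(KK+1) with hn
    set G : Finset ℕ := (Finset.range (KK+1)).biUnion
      (fun k => Finset.Ico (k*k + o*k) (k*k + o*k + k)) with hG
    have hGcard : G.card = ∑ k ∈ Finset.range (KK+1), k := by
      rw [hG, Finset.card_biUnion]
      · apply Finset.sum_congr rfl
        intro k _
        rw [Nat.card_Ico]
        omega
      · intro a _ b _ hab
        apply Finset.disjoint_left.mpr
        intro i hi hi'
        simp only [Finset.mem_Ico] at hi hi'
        rcases Nat.lt_or_ge a b with h | h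
        · have : a*a + o*a + a ≤ b*b + o*b := by nlinarith
          omega
        · have hba : b < a := lt_of_le_of_ne h (Ne.symm hab)
          have : b*b + o*b + b ≤ a*a + o*a := by nlinarith
          omega
    have hsub : ↑G ⊆ P ∩ Set.Ico 1 n := by
      intro i hi
      rw [hG, Finset.coe_biUnion] at hi
      simp only [Set.mem_iUnion, Finset.mem_coe, Finset.mem_Ico, Finset.coe_range,
        Set.mem_Iio] at hi
      obtain ⟨k, hkK, hk1, hk2⟩ := hi
      have hk : 1 ≤ k := by
        by_contra hc
        push_neg at hc
        interval_cases k <;> omega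
      refine ⟨⟨k, hk, hk1, hk2⟩, ?_, ?_⟩
      · nlinarith
      · have : k ≤ KK := by omega
        calc i < k*k + o*k + k := hk2
          _ ≤ (k+1)*(k+1) := by nlinarith
          _ ≤ (KK+1)*(KK+1) := by nlinarith
    have hcard : ∑ k ∈ Finset.range (KK+1), k ≤ Nat.card (P ∩ Set.Ico 1 n : Set ℕ) := by
      rw [← hGcard]
      exact finset_card_le_natCard hsub (inter_ico_finite P n)
    have hsum : (∑ k ∈ Finset.range (KK+1), k) * 2 = (KK+1) * KK :=
      Finset.sum_range_id_mul_two (KK+1)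
    have hnat : n ≤ 4 * Nat.card (P ∩ Set.Ico 1 n : Set ℕ) := by
      have h2 : (KK+1)*(KK+1) ≤ (2*KK)*(KK+1) := Nat.mul_le_mul_right _ (by omega)
      have h3 : (2*KK)*(KK+1) = 2*((∑ k ∈ Finset.range (KK+1), k)*2) := by rw [hsum]; ring
      have h4 : 2*((∑ k ∈ Finset.range (KK+1), k)*2)
          ≤ 4 * Nat.card (P ∩ Set.Ico 1 n : Set ℕ) := by omega
      calc n = (KK+1)*(KK+1) := hn
        _ ≤ (2*KK)*(KK+1) := h2
        _ = 2*((∑ k ∈ Finset.range (KK+1), k)*2) := h3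
        _ ≤ 4 * Nat.card (P ∩ Set.Ico 1 n : Set ℕ) := h4
    rw [div_le_iff₀ (by norm_num : (0:ℝ) < 4)]
    calc (n:ℝ) ≤ 4 * (Nat.card (P ∩ Set.Ico 1 n : Set ℕ) : ℝ) := by exact_mod_cast hnat
      _ = (Nat.card (P ∩ Set.Ico 1 n : Set ℕ) : ℝ) * 4 := by ring

end FMSAux
namespace FMSAux

lemma sqrt_lower (n : ℕ) : Nat.sqrt n * Nat.sqrt n ≤ n := by
  rw [← pow_two]; exact Nat.sqrt_le' n

lemma sqrt_upper (n : ℕ) : n < (Nat.sqrt n + 1) * (Nat.sqrt n + 1) := by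
  simpa [Nat.succ_eq_add_one, pow_two] using Nat.lt_succ_sqrt' n

lemma sqrt_eq_of {k i : ℕ} (h1 : k*k ≤ i) (h2 : i < (k+1)*(k+1)) : Nat.sqrt i = k := by
  have ha : k ≤ Nat.sqrt i := Nat.le_sqrt.mpr h1
  have hb : Nat.sqrt i < k+1 := Nat.sqrt_lt'.mpr (by rw [pow_two]; exact h2)
  omega

variable {X : Type*} (F : FuzzyMetricSpace X)

/-- F-ergodic shadowing implies chain transitivity with chains at scale 1. -/
lemma chain_trans (hcompact : @CompactSpace X (fuzzyTopology F))
    {f : X → X} (hcont : FuzzyContinuous F f) (hsurj : Function.Surjective f)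
    (h : FErgodicShadowing F f) :
    ∀ δ ∈ Set.Ioo (0:ℝ) 1, ∀ x y : X, ∃ n ≥ 1, ∃ c : ℕ → X,
      c 0 = x ∧ c n = y ∧ ∀ i < n, 1 - δ < F.M (f (c i)) (c (i+1)) 1 := by
  intro δ hδ
  obtain ⟨δu, hδu, tu, htu, hu⟩ := ucont F hcompact hcont δ hδ 1 one_pos
  obtain ⟨δ₂, hδ₂, hsh⟩ := h δu hδu.1
  obtain ⟨g, hg⟩ := hsurj.hasRightInverse
  intro x y
  set ξ : ℕ → X := fun i =>
    if i < (Nat.sqrt i)*(Nat.sqrt i) + Nat.sqrt i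
    then f^[i - (Nat.sqrt i)*(Nat.sqrt i)] x
    else g^[(Nat.sqrt i)*(Nat.sqrt i) + 2*(Nat.sqrt i) - i] y with hξ
  -- good steps
  have hgood : ∀ i : ℕ, (∀ k : ℕ, i+1 ≠ k*k+k ∧ i+1 ≠ (k+1)*(k+1)) →
      f (ξ i) = ξ (i+1) := by
    intro i hi
    set k := Nat.sqrt i with hk
    have h1 : k*k ≤ i := sqrt_lower i
    have h2 : i < (k+1)*(k+1) := sqrt_upper i
    have h3 : i + 1 < (k+1)*(k+1) := lt_of_le_of_ne (by omega) (hi k).2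
    have hsq : Nat.sqrt (i+1) = k := sqrt_eq_of (le_trans h1 (Nat.le_succ i)) h3
    by_cases hcase : i < k*k + k
    · have h4 : i + 1 < k*k + k := lt_of_le_of_ne (by omega) (hi k).1
      have e1 : ξ i = f^[i - k*k] x := by
        simp only [hξ]; simp only [← hk]; rw [if_pos hcase]
      have e2 : ξ (i+1) = f^[i+1 - k*k] x := by
        simp only [hξ, hsq]; rw [if_pos h4]
      rw [e1, e2]
      have : i + 1 - k*k = (i - k*k) + 1 := by omega
      rw [this, Function.iterate_succ_apply']
    · push_neg at hcase
      have hexp : (k+1)*(k+1) = k*k+2*k+1 := by ring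
      have h5 : i + 1 ≤ k*k + 2*k := by omega
      have e1 : ξ i = g^[k*k + 2*k - i] y := by
        simp only [hξ]; simp only [← hk]; rw [if_neg (by omega)]
      have e2 : ξ (i+1) = g^[k*k + 2*k - (i+1)] y := by
        simp only [hξ, hsq]; rw [if_neg (by omega)]
      rw [e1, e2]
      have hm : k*k + 2*k - i = (k*k + 2*k - (i+1)) + 1 := by omega
      rw [hm, Function.iterate_succ_apply']
      exact hg _
  -- ξ is a δ₂-ergodic pseudo-orbit at scale tu
  have hdz : densityZero {i | F.M (f (ξ i)) (ξ (i+1)) tu ≤ 1 - δ₂} := by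
    apply dz_mono _ dz_badset
    intro i hi
    simp only [Set.mem_setOf_eq] at hi
    by_contra hbad
    simp only [Set.mem_setOf_eq] at hbad
    have heq : f (ξ i) = ξ (i+1) := by
      apply hgood
      intro k
      constructor <;> intro hk <;> exact hbad ⟨k, by omega⟩
    rw [heq, M_self F _ htu] at hi
    linarith
  obtain ⟨z, hz⟩ := hsh ξ tu htu hdz
  -- find good indices in the x-part and in the y-part
  obtain ⟨i, hiP, hiB, hi1⟩ := dz_hits hz (part_count 0 (by norm_num)) 1
  obtain ⟨j, hjP, hjB, hji⟩ := dz_hits hz (part_count 1 (le_refl 1)) (i+1)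
  obtain ⟨k1, hk11, hk12, hk13⟩ := hiP
  obtain ⟨k2, hk21, hk22, hk23⟩ := hjP
  rw [zero_mul] at hk12 hk13
  rw [one_mul] at hk22 hk23
  have hsqi : Nat.sqrt i = k1 := sqrt_eq_of (by omega) (by nlinarith)
  have hsqj : Nat.sqrt j = k2 := sqrt_eq_of (by nlinarith) (by nlinarith)
  set a := i - k1*k1 with ha
  set m := k2*k2 + 2*k2 - j with hm
  have hm1 : 1 ≤ m := by omega
  have hξi : ξ i = f^[a] x := by
    simp only [hξ, hsqi]; rw [if_pos (by omega)]
  have hξj : ξ j = g^[m] y := by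
    simp only [hξ, hsqj]; rw [if_neg (by omega)]
  have hiM : 1 - δu < F.M (f^[i] z) (f^[a] x) tu := by
    have := hiB
    simp only [Set.mem_setOf_eq, not_le] at this
    rwa [hξi] at this
  have hjM : 1 - δu < F.M (f^[j] z) (g^[m] y) tu := by
    have := hjB
    simp only [Set.mem_setOf_eq, not_le] at this
    rwa [hξj] at this
  -- build the chain
  set n := a + (j - i) + m with hn
  have hn1 : 1 ≤ n := by omega
  set c : ℕ → X := fun q =>
    if q ≤ a then f^[q] x
    else if q ≤ a + (j - i) then f^[i + q - a] z
    else g^[n - q] y with hc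
  refine ⟨n, hn1, c, ?_, ?_, ?_⟩
  · simp only [hc]
    rw [if_pos (Nat.zero_le a)]
    simp
  · simp only [hc]
    rw [if_neg (by omega), if_neg (by omega)]
    simp [Nat.sub_self]
  · intro q hq
    rcases lt_trichotomy q a with hqa | hqa | hqa
    · -- within the x-orbit
      have e1 : c q = f^[q] x := by simp only [hc]; rw [if_pos (by omega)]
      have e2 : c (q+1) = f^[q+1] x := by simp only [hc]; rw [if_pos (by omega)]
      rw [e1, e2, Function.iterate_succ_apply', M_self F _ one_pos]
      linarith [hδ.1]
    · -- the jump from the x-orbit to the z-orbit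
      have e1 : c q = f^[a] x := by
        simp only [hc]; rw [if_pos (by omega)]
        congr 1
      have e2 : c (q+1) = f^[i+1] z := by
        simp only [hc]
        rw [if_neg (by omega), if_pos (by omega)]
        congr 1
        omega
      rw [e1, e2]
      have huse := hu (f^[i] z) (f^[a] x) hiM
      rw [← Function.iterate_succ_apply' f i z] at huse
      rw [F.M_symm] at huse
      exact huse
    · rcases lt_trichotomy q (a + (j - i)) with hqb | hqb | hqb
      · -- within the z-orbit
        have e1 : c q = f^[i + q - a] z := by
          simp only [hc]; rw [if_neg (by omega), if_pos (by omega)]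
        have e2 : c (q+1) = f^[i + (q+1) - a] z := by
          simp only [hc]; rw [if_neg (by omega), if_pos (by omega)]
        rw [e1, e2]
        have he : i + (q+1) - a = (i + q - a) + 1 := by omega
        rw [he, Function.iterate_succ_apply', M_self F _ one_pos]
        linarith [hδ.1]
      · -- the jump from the z-orbit to the backward y-orbit
        have e1 : c q = f^[j] z := by
          simp only [hc]; rw [if_neg (by omega), if_pos (by omega)]
          congr 1
          omega
        have e2 : c (q+1) = g^[m-1] y := by
          simp only [hc]
          rw [if_neg (by omega), if_neg (by omega)]
          congr 1
          omega
        rw [e1, e2]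
        have huse := hu (f^[j] z) (g^[m] y) hjM
        rw [← Function.iterate_succ_apply' f j z] at huse
        have hgy : f (g^[m] y) = g^[m-1] y := by
          have he : m = (m-1) + 1 := by omega
          rw [he, Function.iterate_succ_apply']
          exact hg _
        rw [hgy] at huse
        rw [← Function.iterate_succ_apply' f j z]
        exact huse
      · -- within the backward y-orbit
        have e1 : c q = g^[n - q] y := by
          simp only [hc]; rw [if_neg (by omega), if_neg (by omega)]
        have e2 : c (q+1) = g^[n - (q+1)] y := by
          simp only [hc]; rw [if_neg (by omega), if_neg (by omega)]
        rw [e1, e2]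
        have hgy : f (g^[n - q] y) = g^[n - (q+1)] y := by
          have he : n - q = (n - (q+1)) + 1 := by omega
          rw [he, Function.iterate_succ_apply']
          exact hg _
        rw [hgy, M_self F _ one_pos]
        linarith [hδ.1]

end FMSAux
namespace FMSAux

variable {X : Type*} (F : FuzzyMetricSpace X)

lemma fin_shadow (hcompact : @CompactSpace X (fuzzyTopology F))
    {f : X → X} (hcont : FuzzyContinuous F f) (hsurj : Function.Surjective f)
    (h : FErgodicShadowing F f) :
    ∀ ε ∈ Set.Ioo (0:ℝ) 1, ∃ δ > (0:ℝ), ∀ T > (0:ℝ), ∀ (n : ℕ) (c : ℕ → X),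
      (∀ i < n, 1 - δ < F.M (f (c i)) (c (i+1)) T) →
      ∃ x : X, ∀ i ≤ n, 1 - ε < F.M (f^[i] x) (c i) (max T 1) := by
  intro ε hε
  obtain ⟨δ₂, hδ₂, hsh⟩ := h ε hε.1
  set δ : ℝ := min δ₂ (1/2) with hδdef
  have hδ : δ ∈ Set.Ioo (0:ℝ) 1 :=
    ⟨lt_min hδ₂ (by norm_num), lt_of_le_of_lt (min_le_right _ _) (by norm_num)⟩
  have hδle : δ ≤ δ₂ := min_le_left _ _
  refine ⟨δ, hδ.1, ?_⟩
  intro T hT n c hchain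
  obtain ⟨m, hm1, d, hd0, hdm, hdstep⟩ :=
    chain_trans F hcompact hcont hsurj h δ hδ (c n) (c 0)
  set p := n + m with hp
  have hp0 : 0 < p := by omega
  set ν : ℕ → X := fun j => if j % p < n then c (j % p) else d (j % p - n) with hν
  set S := max T 1 with hS
  have hS0 : (0:ℝ) < S := lt_of_lt_of_le one_pos (le_max_right _ _)
  have hTS : T ≤ S := le_max_left _ _
  have h1S : (1:ℝ) ≤ S := le_max_right _ _
  -- every step of ν is δ₂-good at scale S
  have hstep : ∀ j : ℕ, 1 - δ₂ < F.M (f (ν j)) (ν (j+1)) S := by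
    intro j
    set r := j % p with hr
    have hrp : r < p := Nat.mod_lt _ hp0
    have hmod1 : (j+1) % p = (r+1) % p := by
      conv_lhs => rw [Nat.add_mod]
      rw [Nat.add_mod r 1 p, Nat.mod_eq_of_lt hrp]
    have hνj : ν j = if r < n then c r else d (r - n) := by
      simp only [hν, ← hr]
    by_cases hrp1 : r + 1 < p
    · have hmod : (j+1) % p = r+1 := by rw [hmod1, Nat.mod_eq_of_lt hrp1]
      have hνj1 : ν (j+1) = if r+1 < n then c (r+1) else d (r+1-n) := by
        simp only [hν, hmod]
      by_cases hrn : r < n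
      · -- chain part
        have hc1 : ν j = c r := by rw [hνj, if_pos hrn]
        have hstep := hchain r hrn
        have hmono := M_mono F (f (c r)) (c (r+1)) hT hTS
        by_cases hrn1 : r + 1 < n
        · have hc2 : ν (j+1) = c (r+1) := by rw [hνj1, if_pos hrn1]
          rw [hc1, hc2]
          linarith
        · have hrn2 : r + 1 = n := by omega
          have hc2 : ν (j+1) = c (r+1) := by
            rw [hνj1, if_neg hrn1]
            have : r + 1 - n = 0 := by omega
            rw [this, hd0, hrn2]
          rw [hc1, hc2]
          linarith
      · -- connecting chain part
        push_neg at hrn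
        have hc1 : ν j = d (r - n) := by rw [hνj, if_neg (by omega)]
        have hc2 : ν (j+1) = d ((r-n)+1) := by
          rw [hνj1, if_neg (by omega)]
          congr 1
          omega
        have hstep := hdstep (r - n) (by omega)
        have hmono := M_mono F (f (d (r-n))) (d ((r-n)+1)) one_pos h1S
        rw [hc1, hc2]
        linarith
    · -- wrap-around step
      have hrp2 : r + 1 = p := by omega
      have hrn : n ≤ r := by omega
      have hc1 : ν j = d (r - n) := by rw [hνj, if_neg (by omega)]
      have hmod : (j+1) % p = 0 := by rw [hmod1, hrp2, Nat.mod_self]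
      have hc2 : ν (j+1) = c 0 := by
        simp only [hν, hmod]
        by_cases hn0 : 0 < n
        · rw [if_pos hn0]
        · rw [if_neg hn0]
          have hn0' : n = 0 := by omega
          have : 0 - n = 0 := by omega
          rw [this, hd0, hn0']
      have hre : r - n = m - 1 := by omega
      have hstep := hdstep (m-1) (by omega)
      have hmm : (m-1) + 1 = m := by omega
      rw [hmm, hdm] at hstep
      have hmono := M_mono F (f (d (m-1))) (c 0) one_pos h1S
      rw [hc1, hc2, hre]
      linarith
  have hdz : densityZero {i | F.M (f (ν i)) (ν (i+1)) S ≤ 1 - δ₂} := by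
    have hsub : {i : ℕ | F.M (f (ν i)) (ν (i+1)) S ≤ 1 - δ₂} ⊆ (∅ : Set ℕ) := by
      intro i hi
      simp only [Set.mem_setOf_eq] at hi
      exact absurd hi (not_le.mpr (hstep i))
    exact dz_mono hsub dz_empty
  obtain ⟨z, hz⟩ := hsh ν S hS0 hdz
  obtain ⟨k, hk1, hkgood⟩ := dz_good_block hz (show n < p by omega)
  refine ⟨f^[k*p] z, ?_⟩
  intro i hi
  have hgood := hkgood (k*p+i) (by omega) (by omega)
  simp only [Set.mem_setOf_eq, not_le] at hgood
  have hit : f^[i + k*p] z = f^[i] (f^[k*p] z) := Function.iterate_add_apply f i (k*p) z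
  have hν_eq : ν (k*p + i) = c i := by
    have hmod : (k*p + i) % p = i := by
      rw [Nat.add_comm, Nat.add_mul_mod_self_right, Nat.mod_eq_of_lt (by omega)]
    simp only [hν, hmod]
    rcases lt_or_eq_of_le hi with hlt | heq
    · rw [if_pos hlt]
    · rw [if_neg (by omega)]
      have : i - n = 0 := by omega
      rw [this, hd0, heq]
  rw [hν_eq] at hgood
  have : k*p + i = i + k*p := by omega
  rw [this, hit] at hgood
  exact hgood

end FMSAux
open FMSAux in
/-- On a compact complete fuzzy metric space, for a fuzzy continuous onto map,
F-ergodic shadowing implies F-shadowing. -/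
theorem ergodicShadowing_implies_shadowing {X : Type*} (F : FuzzyMetricSpace X)
    (hcompact : @CompactSpace X (fuzzyTopology F))
    (hcomplete : FComplete F)
    (f : X → X) (hcont : FuzzyContinuous F f) (hsurj : Function.Surjective f)
    (h : FErgodicShadowing F f) : FShadowing F f := by
  intro ε hε
  rcases le_or_gt 1 ε with hε1 | hε1
  · -- trivial when ε ≥ 1
    refine ⟨1/2, by norm_num, fun μ _ => ?_⟩
    exact ⟨μ 0, 1, one_pos,
      fun i => lt_of_le_of_lt (by linarith) (F.M_pos _ _ 1 one_pos)⟩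
  · obtain ⟨θ, hθ, hstar⟩ := star_near_one F hε
    set ε₁ : ℝ := θ/2 with hε₁def
    have hε₁ : ε₁ ∈ Set.Ioo (0:ℝ) 1 := ⟨by rw [hε₁def]; linarith [hθ.1], by
      have := hθ.2; rw [hε₁def]; linarith⟩
    obtain ⟨δ, hδ, hfin⟩ := fin_shadow F hcompact hcont hsurj h ε₁ hε₁
    refine ⟨δ, hδ, ?_⟩
    rintro μ ⟨T, hT, hμ⟩
    set S : ℝ := max T 1 with hSdef
    have hS0 : (0:ℝ) < S := lt_of_lt_of_le one_pos (le_max_right _ _)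
    letI := fuzzyTopology F
    haveI := hcompact
    set A : ℕ → Set X := fun n => {x | ∀ i ≤ n, 1 - ε₁ < F.M (f^[i] x) (μ i) S}
      with hA
    have hAne : ∀ n, (A n).Nonempty := by
      intro n
      obtain ⟨x, hx⟩ := hfin T hT n μ (fun i _ => hμ i)
      exact ⟨x, hx⟩
    have hKdec : ∀ n : ℕ, closure (A (n+1)) ⊆ closure (A n) :=
      fun n => closure_mono (fun x hx i hi => hx i (by omega))
    have hKne : ∀ n : ℕ, (closure (A n)).Nonempty :=
      fun n => (hAne n).mono subset_closure
    have hint := IsCompact.nonempty_iInter_of_sequence_nonempty_isCompact_isClosed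
      (fun n => closure (A n)) hKdec hKne (isClosed_closure.isCompact)
      (fun n => isClosed_closure)
    obtain ⟨x, hx⟩ := hint
    refine ⟨x, S + 1, by linarith, ?_⟩
    intro i
    have hxi : x ∈ closure (A i) := Set.mem_iInter.mp hx i
    obtain ⟨δᵢ, hδᵢ, tᵢ, htᵢ, hcl⟩ := iter_cont F hcont i x θ hθ 1 one_pos
    have hball_open : IsOpen (fuzzyBall F x δᵢ tᵢ) :=
      ball_open F x hδᵢ.1 hδᵢ.2 htᵢ
    have hball_mem : x ∈ fuzzyBall F x δᵢ tᵢ := mem_ball_self F x hδᵢ.1 htᵢ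
    obtain ⟨y, hyb, hyA⟩ := mem_closure_iff.mp hxi _ hball_open hball_mem
    have hyb' : 1 - δᵢ < F.M y x tᵢ := by
      have : 1 - δᵢ < F.M x y tᵢ := hyb
      rwa [F.M_symm] at this
    have h1 : 1 - θ < F.M (f^[i] y) (f^[i] x) 1 := hcl y hyb'
    have h2 : 1 - ε₁ < F.M (f^[i] y) (μ i) S := hyA i (le_refl i)
    have h2' : 1 - θ < F.M (f^[i] y) (μ i) S := by
      rw [hε₁def] at h2; linarith [hθ.1]
    have htri := F.M_triangle (f^[i] x) (f^[i] y) (μ i) 1 S one_pos hS0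
    have hst := hstar (F.M (f^[i] x) (f^[i] y) 1) (F.M (f^[i] y) (μ i) S)
      (M_mem F _ _ one_pos) (M_mem F _ _ hS0)
      (by rw [F.M_symm]; exact h1) h2'
    have hsc : (1:ℝ) + S = S + 1 := by ring
    rw [hsc] at htri
    linarith
end

section
/- Let X = (0,1] and f : X → X be defined by f(x) = (3/4)x + 1/8 on (0, 1/2], f(x) = (3/2)x − 1/4 on [1/2, 3/4], f(x) = (1/2)x + 1/2 on [3/4, 1]. Then for all x, y ∈ X with x ≠ y, min{f(x), f(y)}/max{f(x), f(y)} > (1/10) · min{x, y}/max{x, y}. -/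
/-- For the piecewise linear map `f` on `(0,1]` with branches
`(3/4)x + 1/8`, `(3/2)x - 1/4`, `(1/2)x + 1/2`, one has
`min{f(x),f(y)}/max{f(x),f(y)} > (1/10)·min{x,y}/max{x,y}` for `x ≠ y`. -/
theorem piecewise_ratio_estimate
    (f : {a : ℝ // a ∈ Set.Ioc (0:ℝ) 1} → {a : ℝ // a ∈ Set.Ioc (0:ℝ) 1})
    (h1 : ∀ x, x.1 ≤ 1 / 2 → (f x).1 = 3 / 4 * x.1 + 1 / 8)
    (h2 : ∀ x, 1 / 2 ≤ x.1 → x.1 ≤ 3 / 4 → (f x).1 = 3 / 2 * x.1 - 1 / 4)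
    (h3 : ∀ x, 3 / 4 ≤ x.1 → (f x).1 = 1 / 2 * x.1 + 1 / 2) :
    ∀ x y : {a : ℝ // a ∈ Set.Ioc (0:ℝ) 1}, x ≠ y →
      min (f x).1 (f y).1 / max (f x).1 (f y).1 >
        1 / 10 * (min x.1 y.1 / max x.1 y.1) := by
  have key : ∀ x : {a : ℝ // a ∈ Set.Ioc (0:ℝ) 1}, (1:ℝ)/8 < (f x).1 := by
    intro x
    rcases le_or_gt x.1 (1/2) with h | h
    · rw [h1 x h]; have := x.2.1; linarith
    · rcases le_or_gt x.1 (3/4) with h' | h'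
      · rw [h2 x h.le h']; linarith
      · rw [h3 x h'.le]; linarith
  intro x y _
  have hfx := key x
  have hfy := key y
  have hfx1 := (f x).2.2
  have hfy1 := (f y).2.2
  have hmin : (1:ℝ)/8 < min (f x).1 (f y).1 := lt_min hfx hfy
  have hmax0 : (0:ℝ) < max (f x).1 (f y).1 := lt_of_lt_of_le (by linarith) (le_max_left _ _)
  have hmax1 : max (f x).1 (f y).1 ≤ 1 := max_le hfx1 hfy1
  have hL : (1:ℝ)/8 < min (f x).1 (f y).1 / max (f x).1 (f y).1 := by
    rw [lt_div_iff₀ hmax0]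
    calc (1:ℝ)/8 * max (f x).1 (f y).1 ≤ 1/8 * 1 := by
          exact mul_le_mul_of_nonneg_left hmax1 (by norm_num)
      _ < min (f x).1 (f y).1 := by linarith
  have hx0 := x.2.1
  have hy0 := y.2.1
  have hmaxxy : (0:ℝ) < max x.1 y.1 := lt_of_lt_of_le hx0 (le_max_left _ _)
  have hle : min x.1 y.1 / max x.1 y.1 ≤ 1 := by
    rw [div_le_one hmaxxy]; exact min_le_max
  nlinarith [hle, hL]
end

section
/- Let X = (0,1] with fuzzy metric M₁(x,y,t) = 1 if x = y and M₁(x,y,t) = min{x,y}/max{x,y} otherwise, and let f be the piecewise linear map f(x) = (3/4)x + 1/8 on (0,1/2], (3/2)x − 1/4 on [1/2,3/4], (1/2)x + 1/2 on [3/4,1]. Then the fuzzy dynamical system (X, M₁, ·, f) does not have the F-shadowing property. -/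
/-- The fuzzy metric on `(0,1]` given by `M₁(x,y,t) = 1` if `x = y` and
`min{x,y}/max{x,y}` otherwise. -/
noncomputable def M1 (x y : {a : ℝ // a ∈ Set.Ioc (0:ℝ) 1}) (_t : ℝ) : ℝ :=
  if x = y then 1 else min x.1 y.1 / max x.1 y.1

set_option maxHeartbeats 1000000 in
/-- The piecewise linear map `f` does not have the F-shadowing property with
respect to `M₁`. -/
theorem piecewise_not_FShadowing
    (f : {a : ℝ // a ∈ Set.Ioc (0:ℝ) 1} → {a : ℝ // a ∈ Set.Ioc (0:ℝ) 1})
    (h1 : ∀ x, x.1 ≤ 1 / 2 → (f x).1 = 3 / 4 * x.1 + 1 / 8)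
    (h2 : ∀ x, 1 / 2 ≤ x.1 → x.1 ≤ 3 / 4 → (f x).1 = 3 / 2 * x.1 - 1 / 4)
    (h3 : ∀ x, 3 / 4 ≤ x.1 → (f x).1 = 1 / 2 * x.1 + 1 / 2) :
    ¬ (∀ ε > (0:ℝ), ∃ δ > (0:ℝ), ∀ μ : ℕ → {a : ℝ // a ∈ Set.Ioc (0:ℝ) 1},
        (∃ T > (0:ℝ), ∀ i : ℕ, M1 (f (μ i)) (μ (i + 1)) T > 1 - δ) →
        ∃ x, ∃ T₀ > (0:ℝ), ∀ i : ℕ, M1 (f^[i] x) (μ i) T₀ > 1 - ε) := by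
  intro H
  obtain ⟨δ, hδ, H⟩ := H (1/5) (by norm_num)
  -- points ≤ 1/2 stay ≤ 1/2
  have hle : ∀ x : {a : ℝ // a ∈ Set.Ioc (0:ℝ) 1}, x.1 ≤ 1/2 → (f x).1 ≤ 1/2 := by
    intro x hx; rw [h1 x hx]; linarith
  have hiter : ∀ (x : {a : ℝ // a ∈ Set.Ioc (0:ℝ) 1}), x.1 ≤ 1/2 →
      ∀ i, (f^[i] x).1 ≤ 1/2 := by
    intro x hx i
    induction i with
    | zero => simpa using hx
    | succ n ih => rw [Function.iterate_succ_apply']; exact hle _ ih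
  -- the point 2/5
  set c : {a : ℝ // a ∈ Set.Ioc (0:ℝ) 1} := ⟨2/5, by constructor <;> norm_num⟩ with hcdef
  have hc : ∀ n, (f^[n] c).1 = 1/2 - (3/4)^n / 10 := by
    intro n
    induction n with
    | zero => simp [hcdef]; norm_num
    | succ n ih =>
      have hy : (f^[n] c).1 ≤ 1/2 := by
        rw [ih]
        have : (0:ℝ) ≤ (3/4)^n / 10 := by positivity
        linarith
      rw [Function.iterate_succ_apply', h1 _ hy, ih]
      ring
  -- choose K ≥ 1 with (3/4)^K/10 < δ/8
  obtain ⟨N, hN⟩ := exists_pow_lt_of_lt_one (show (0:ℝ) < 5*δ/4 by linarith)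
    (show (3:ℝ)/4 < 1 by norm_num)
  have hK34 : (3/4:ℝ)^(N+1) < 5*δ/4 := by
    have h1' : (0:ℝ) ≤ (3/4:ℝ)^N := by positivity
    calc (3/4:ℝ)^(N+1) = (3/4)^N * (3/4) := by ring
    _ ≤ (3/4)^N := by nlinarith
    _ < 5*δ/4 := hN
  set K := N + 1 with hKdef
  have hK1 : 1 ≤ K := by omega
  set a : ℝ := (3/4)^K / 10 with hadef
  have ha_pos : 0 < a := by positivity
  have ha_small : a < δ/8 := by rw [hadef]; linarith
  have ha_le : a ≤ 1/10 := by
    have : (3/4:ℝ)^K ≤ 1 := pow_le_one₀ (by norm_num) (by norm_num)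
    rw [hadef]; linarith
  set b : {a : ℝ // a ∈ Set.Ioc (0:ℝ) 1} := ⟨1/2 + a, by constructor <;> linarith⟩ with hbdef
  -- the pseudo-orbit
  set μ : ℕ → {a : ℝ // a ∈ Set.Ioc (0:ℝ) 1} :=
    fun i => if i < K then f^[i] c else f^[i - K] b with hμdef
  have hμ1 : ∀ i, i < K → μ i = f^[i] c := by intro i hi; simp [hμdef, hi]
  have hμ2 : ∀ i, K ≤ i → μ i = f^[i - K] b := by
    intro i hi; simp [hμdef, Nat.not_lt.mpr hi]
  -- it is a δ-pseudo-orbit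
  have hpseudo : ∃ T > (0:ℝ), ∀ i : ℕ, M1 (f (μ i)) (μ (i + 1)) T > 1 - δ := by
    refine ⟨1, one_pos, fun i => ?_⟩
    rcases lt_trichotomy (i+1) K with hiK | hiK | hiK
    · -- both in the c-orbit part
      have hi : i < K := by omega
      rw [hμ1 i hi, hμ1 (i+1) hiK, ← Function.iterate_succ_apply' f i c]
      unfold M1; rw [if_pos rfl]; linarith
    · -- the jump
      have hi : i < K := by omega
      rw [hμ1 i hi, hμ2 (i+1) (le_of_eq hiK.symm), hiK]
      simp only [Nat.sub_self, Function.iterate_zero_apply]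
      rw [← Function.iterate_succ_apply' f i c]
      have hval : (f^[i+1] c).1 = 1/2 - a := by rw [hc, hiK, hadef]
      have hne : f^[i+1] c ≠ b := by
        intro h
        have := congrArg Subtype.val h
        rw [hval, hbdef] at this
        simp at this; linarith
      unfold M1; rw [if_neg hne]
      rw [hval]
      have hb1 : (b:{a : ℝ // a ∈ Set.Ioc (0:ℝ) 1}).1 = 1/2 + a := rfl
      rw [hb1, min_eq_left (by linarith), max_eq_right (by linarith)]
      rw [gt_iff_lt, lt_div_iff₀ (by linarith : (0:ℝ) < 1/2 + a)]
      nlinarith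
    · -- both in the b-orbit part
      have hi : K ≤ i := by omega
      have hi1 : K ≤ i + 1 := by omega
      rw [hμ2 i hi, hμ2 (i+1) hi1]
      have : i + 1 - K = (i - K) + 1 := by omega
      rw [this, Function.iterate_succ_apply']
      unfold M1; rw [if_pos rfl]; linarith
  obtain ⟨x, T₀, hT₀, hx⟩ := H μ hpseudo
  -- from step 0 : x ≤ 1/2
  have hx0 := hx 0
  rw [hμ1 0 (by omega)] at hx0
  simp only [Function.iterate_zero_apply] at hx0
  have hxhalf : x.1 ≤ 1/2 := by
    unfold M1 at hx0
    by_cases hxe : x = c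
    · rw [hxe, hcdef]; norm_num
    · rw [if_neg hxe] at hx0
      have hc1 : (c:{a : ℝ // a ∈ Set.Ioc (0:ℝ) 1}).1 = 2/5 := rfl
      rw [hc1] at hx0
      rcases le_or_gt x.1 (2/5) with h' | h'
      · linarith
      · rw [min_eq_right (le_of_lt h'), max_eq_left (le_of_lt h')] at hx0
        have hxpos : (0:ℝ) < x.1 := x.2.1
        rw [gt_iff_lt, lt_div_iff₀ hxpos] at hx0
        norm_num at hx0 ⊢
        linarith
  -- the b-orbit eventually exceeds 3/4
  have hesc : ∃ k, (3:ℝ)/4 ≤ (f^[k] b).1 := by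
    by_contra hall
    push_neg at hall
    have grow : ∀ k, 1/2 + (3/2)^k * a ≤ (f^[k] b).1 := by
      intro k
      induction k with
      | zero => simp [hbdef]
      | succ n ih =>
        have hpn : (0:ℝ) ≤ (3/2)^n := by positivity
        have hy1 : 1/2 ≤ (f^[n] b).1 := by nlinarith
        have hy2 : (f^[n] b).1 ≤ 3/4 := le_of_lt (hall n)
        rw [Function.iterate_succ_apply', h2 _ hy1 hy2]
        have : (3/2:ℝ)^(n+1) = (3/2)^n * (3/2) := by ring
        rw [this]
        nlinarith
    obtain ⟨n, hn⟩ := pow_unbounded_of_one_lt (1/(4*a)) (show (1:ℝ) < 3/2 by norm_num)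
    have h4 : (1:ℝ)/4 < (3/2)^n * a := by
      have := mul_lt_mul_of_pos_right hn ha_pos
      have heq : 1/(4*a) * a = 1/4 := by field_simp
      rw [heq] at this
      linarith
    have := grow n
    have := hall n
    linarith
  obtain ⟨k, hk⟩ := hesc
  -- contradiction at step K + k
  have hfin := hx (K + k)
  rw [hμ2 (K + k) (by omega)] at hfin
  have hkk : K + k - K = k := by omega
  rw [hkk] at hfin
  have hlhs : (f^[K + k] x).1 ≤ 1/2 := hiter x hxhalf (K + k)
  have hne : f^[K + k] x ≠ f^[k] b := by
    intro h
    have := congrArg Subtype.val h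
    rw [this] at hlhs
    linarith
  unfold M1 at hfin
  rw [if_neg hne, min_eq_left (by linarith), max_eq_right (by linarith)] at hfin
  have hpos : (0:ℝ) < (f^[k] b).1 := (f^[k] b).2.1
  rw [gt_iff_lt, lt_div_iff₀ hpos] at hfin
  nlinarith
end
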